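/- arXiv:1401.5541 — 11 statements merged into one kernel-verified Lean document; each statement's English description precedes it below -/
import Mathlib

section
/- Let u₀: ℝ → ℝ be continuously differentiable with u₀' integrable on ℝ and with lim_{a→+∞} u₀(a) = lim_{a→−∞} u₀(a) = u_∞. Let t > 0 satisfy 1 + t·u₀'(a) > 0 for all a ∈ ℝ, and suppose ξ_t(a) = a + t·u₀(a) is a bijection of ℝ onto ℝ. Let ψ: ℝ → ℝ be continuous with ψ∘u₀ integrable on ℝ. Then x ↦ ψ(u₀(ξ_t⁻¹(x))) is integrable on ℝ and ∫_ℝ ψ(u₀(ξ_t⁻¹(x))) dx = ∫_ℝ ψ(u₀(a)) da. In other words, for smooth (shock-free) solutions u(x,t) = u₀(ξ_t⁻¹(x)) of inviscid Burgers, the integral ∫_ℝ ψ(u(x,t)) dx is conserved. -/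
open MeasureTheory

/-- Conservation of `∫ ψ(u(x,t)) dx` for smooth (shock-free) inviscid Burgers solutions
`u(x,t) = u₀(ξ_t⁻¹(x))`: if `ξ_t(a) = a + t·u₀(a)` is bijective and `1 + t·u₀'(a) > 0`,
then for any continuous `ψ` with `ψ∘u₀` integrable, `x ↦ ψ(u₀(ξ_t⁻¹(x)))` is integrable
and its integral equals `∫ ψ(u₀(a)) da`. -/
theorem smooth_burgers_conservation (u₀ : ℝ → ℝ) (uinf t : ℝ) (ψ : ℝ → ℝ)
    (hC1 : ContDiff ℝ 1 u₀)
    (hint : Integrable (deriv u₀))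
    (htop : Filter.Tendsto u₀ Filter.atTop (nhds uinf))
    (hbot : Filter.Tendsto u₀ Filter.atBot (nhds uinf))
    (ht : 0 < t)
    (hpos : ∀ a : ℝ, 0 < 1 + t * deriv u₀ a)
    (hbij : Function.Bijective (fun a => a + t * u₀ a))
    (hψ : Continuous ψ)
    (hψint : Integrable (fun a => ψ (u₀ a))) :
    Integrable (fun x => ψ (u₀ (Function.invFun (fun a => a + t * u₀ a) x))) ∧
    ∫ x : ℝ, ψ (u₀ (Function.invFun (fun a => a + t * u₀ a) x)) = ∫ a : ℝ, ψ (u₀ a) := by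
  set ξ : ℝ → ℝ := fun a => a + t * u₀ a with hξ
  set g : ℝ → ℝ := fun x => ψ (u₀ (Function.invFun ξ x)) with hg
  have hu₀diff : Differentiable ℝ u₀ := hC1.differentiable one_ne_zero
  have hu₀cont : Continuous u₀ := hu₀diff.continuous
  have hξderiv : ∀ a : ℝ, HasDerivAt ξ (1 + t * deriv u₀ a) a := by
    intro a
    exact (hasDerivAt_id a).add (((hu₀diff a).hasDerivAt).const_mul t)
  have hli : Function.LeftInverse (Function.invFun ξ) ξ :=
    Function.leftInverse_invFun hbij.1
  -- boundedness of ψ ∘ u₀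
  have hgb : ∃ C, ∀ a : ℝ, ‖ψ (u₀ a)‖ ≤ C := by
    have htop' : Filter.Tendsto (fun a => ψ (u₀ a)) Filter.atTop (nhds (ψ uinf)) :=
      (hψ.continuousAt.tendsto).comp htop
    have hbot' : Filter.Tendsto (fun a => ψ (u₀ a)) Filter.atBot (nhds (ψ uinf)) :=
      (hψ.continuousAt.tendsto).comp hbot
    obtain ⟨A, hA⟩ := Filter.eventually_atTop.1
      (htop'.eventually (Metric.closedBall_mem_nhds (ψ uinf) one_pos))
    obtain ⟨B, hB⟩ := Filter.eventually_atBot.1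
      (hbot'.eventually (Metric.closedBall_mem_nhds (ψ uinf) one_pos))
    obtain ⟨C, hC⟩ := (isCompact_Icc (a := B) (b := A)).exists_bound_of_continuousOn
      ((hψ.comp hu₀cont).continuousOn)
    refine ⟨max C (‖ψ uinf‖ + 1), fun a => ?_⟩
    rcases le_total a A with h1 | h1
    · rcases le_total B a with h2 | h2
      · exact le_max_of_le_left (hC a ⟨h2, h1⟩)
      · have := hB a h2
        rw [Real.dist_eq] at this
        refine le_max_of_le_right ?_
        calc ‖ψ (u₀ a)‖ = |ψ (u₀ a) - ψ uinf + ψ uinf| := by rw [Real.norm_eq_abs]; ring_nf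
          _ ≤ |ψ (u₀ a) - ψ uinf| + |ψ uinf| := abs_add_le _ _
          _ ≤ 1 + ‖ψ uinf‖ := by exact add_le_add this le_rfl
          _ = ‖ψ uinf‖ + 1 := by ring
    · have := hA a h1
      rw [Real.dist_eq] at this
      refine le_max_of_le_right ?_
      calc ‖ψ (u₀ a)‖ = |ψ (u₀ a) - ψ uinf + ψ uinf| := by rw [Real.norm_eq_abs]; ring_nf
        _ ≤ |ψ (u₀ a) - ψ uinf| + |ψ uinf| := abs_add_le _ _
        _ ≤ 1 + ‖ψ uinf‖ := by exact add_le_add this le_rfl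
        _ = ‖ψ uinf‖ + 1 := by ring
  -- integrability of ψ(u₀)·u₀'
  have hmulint : Integrable (fun a => ψ (u₀ a) * deriv u₀ a) :=
    hint.bdd_mul ((hψ.comp hu₀cont).aestronglyMeasurable) (Filter.Eventually.of_forall hgb.choose_spec)
  -- the key vanishing integral
  have hzero : ∫ a : ℝ, ψ (u₀ a) * deriv u₀ a = 0 := by
    set Ψ : ℝ → ℝ := fun x => ∫ y in (0:ℝ)..x, ψ y with hΨ
    have hΨderiv : ∀ x : ℝ, HasDerivAt Ψ (ψ x) x := fun x =>
      (hψ.integral_hasStrictDerivAt 0 x).hasDerivAt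
    have hΨcont : Continuous Ψ :=
      continuous_iff_continuousAt.2 fun x => (hΨderiv x).continuousAt
    set F : ℝ → ℝ := fun a => Ψ (u₀ a) with hF
    have hFderiv : ∀ a : ℝ, HasDerivAt F (ψ (u₀ a) * deriv u₀ a) a := fun a =>
      (hΨderiv (u₀ a)).comp a (hu₀diff a).hasDerivAt
    have hFtop : Filter.Tendsto F Filter.atTop (nhds (Ψ uinf)) :=
      (hΨcont.continuousAt.tendsto).comp htop
    have hFbot : Filter.Tendsto F Filter.atBot (nhds (Ψ uinf)) :=
      (hΨcont.continuousAt.tendsto).comp hbot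
    have hIoi : ∫ a in Set.Ioi (0:ℝ), ψ (u₀ a) * deriv u₀ a = Ψ uinf - F 0 :=
      MeasureTheory.integral_Ioi_of_hasDerivAt_of_tendsto'
        (fun x _ => hFderiv x) hmulint.integrableOn hFtop
    have hIic : ∫ a in Set.Iic (0:ℝ), ψ (u₀ a) * deriv u₀ a = F 0 - Ψ uinf :=
      MeasureTheory.integral_Iic_of_hasDerivAt_of_tendsto'
        (fun x _ => hFderiv x) hmulint.integrableOn hFbot
    have := intervalIntegral.integral_Iic_add_Ioi (b := (0:ℝ))
      hmulint.integrableOn hmulint.integrableOn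
    rw [← this, hIoi, hIic]; ring
  -- the weighted integrand
  have hkey : (fun a : ℝ => |1 + t * deriv u₀ a| • g (ξ a)) =
      fun a : ℝ => ψ (u₀ a) + t * (ψ (u₀ a) * deriv u₀ a) := by
    funext a
    rw [hg]
    simp only [hli a, abs_of_pos (hpos a), smul_eq_mul]
    ring
  have hintsum : Integrable (fun a : ℝ => ψ (u₀ a) + t * (ψ (u₀ a) * deriv u₀ a)) :=
    hψint.add (hmulint.const_mul t)
  have hinj : Set.InjOn ξ Set.univ := hbij.1.injOn
  have hξd' : ∀ x ∈ Set.univ, HasDerivWithinAt ξ (1 + t * deriv u₀ x) Set.univ x :=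
    fun x _ => (hξderiv x).hasDerivWithinAt
  have himg : ξ '' Set.univ = Set.univ := by
    rw [Set.image_univ]; exact hbij.2.range_eq
  constructor
  · have := (MeasureTheory.integrableOn_image_iff_integrableOn_abs_deriv_smul
      MeasurableSet.univ hξd' hinj g).2 (by rw [hkey]; exact hintsum.integrableOn)
    rw [himg] at this
    exact (integrableOn_univ.1 this)
  · have hcov := MeasureTheory.integral_image_eq_integral_abs_deriv_smul
      MeasurableSet.univ hξd' hinj g
    rw [himg, MeasureTheory.setIntegral_univ, MeasureTheory.setIntegral_univ, hkey] at hcov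
    rw [hcov, MeasureTheory.integral_add hψint (hmulint.const_mul t),
      MeasureTheory.integral_const_mul, hzero]
    ring
end

section
/- Let u₀: ℝ → ℝ be bounded and continuously differentiable with u₀' integrable on ℝ and lim_{a→±∞} u₀(a) = u_∞. Let t > 0 and let a₋ < a₊ be such that x_* := a₋ + t·u₀(a₋) = a₊ + t·u₀(a₊), and suppose 1 + t·u₀'(a) > 0 for all a ∉ (a₋, a₊). Then ξ_t(a) = a + t·u₀(a) maps (−∞, a₋] strictly increasingly onto (−∞, x_*] and [a₊, ∞) strictly increasingly onto [x_*, ∞); define for x ≠ x_* the single-shock Burgers profile u(x,t) := u₀(a), where a ∈ ℝ∖(a₋,a₊) is the unique label with ξ_t(a) = x. Then for every continuous ψ: ℝ → ℝ with ψ∘u₀ integrable on ℝ, the function x ↦ ψ(u(x,t)) is integrable on ℝ and the Lagrangian anomaly formula holds: ∫_ℝ ψ(u(x,t)) dx − ∫_ℝ ψ(u₀(a)) da = −[ ∫_{a₋}^{a₊} ψ(u₀(a)) da − t·∫_{u₊}^{u₋} ψ(v) dv ], where u₋ := u₀(a₋) and u₊ := u₀(a₊). -/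
open MeasureTheory

/-- Lagrangian anomaly formula for a single-shock Burgers profile: with shock interval
`[am, ap]` and shock location `xs = am + t·u₀(am) = ap + t·u₀(ap)`, the map
`ξ_t(a) = a + t·u₀(a)` maps `(−∞, am]` strictly increasingly onto `(−∞, xs]` and
`[ap, ∞)` strictly increasingly onto `[xs, ∞)`; and for any profile `u` with
`u(ξ_t(a)) = u₀(a)` for labels `a` outside `[am, ap]`, and any continuous `ψ` with
`ψ∘u₀` integrable, `ψ∘u` is integrable and
`∫ ψ(u(x,t)) dx − ∫ ψ(u₀(a)) da = −[∫_{am}^{ap} ψ(u₀(a)) da − t·∫_{u₊}^{u₋} ψ(v) dv]`. -/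
theorem single_shock_lagrangian_anomaly (u₀ : ℝ → ℝ) (uinf t am ap xs : ℝ) (ψ : ℝ → ℝ)
    (hC1 : ContDiff ℝ 1 u₀)
    (hbdd : ∃ M, ∀ a, |u₀ a| ≤ M)
    (hint : Integrable (deriv u₀))
    (htop : Filter.Tendsto u₀ Filter.atTop (nhds uinf))
    (hbot : Filter.Tendsto u₀ Filter.atBot (nhds uinf))
    (ht : 0 < t) (hlt : am < ap)
    (hendm : xs = am + t * u₀ am) (hendp : xs = ap + t * u₀ ap)
    (hpos : ∀ a : ℝ, a ∉ Set.Ioo am ap → 0 < 1 + t * deriv u₀ a)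
    (hψ : Continuous ψ)
    (hψint : Integrable (fun a => ψ (u₀ a))) :
    StrictMonoOn (fun a => a + t * u₀ a) (Set.Iic am) ∧
    (fun a => a + t * u₀ a) '' Set.Iic am = Set.Iic xs ∧
    StrictMonoOn (fun a => a + t * u₀ a) (Set.Ici ap) ∧
    (fun a => a + t * u₀ a) '' Set.Ici ap = Set.Ici xs ∧
    (∀ u : ℝ → ℝ,
      (∀ a : ℝ, (a < am ∨ ap < a) → u (a + t * u₀ a) = u₀ a) →
      Integrable (fun x => ψ (u x)) ∧
      (∫ x : ℝ, ψ (u x)) - (∫ a : ℝ, ψ (u₀ a))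
        = -((∫ a in am..ap, ψ (u₀ a)) - t * ∫ v in (u₀ ap)..(u₀ am), ψ v)) := by
  have hdiff : Differentiable ℝ u₀ := hC1.differentiable one_ne_zero
  set ξ : ℝ → ℝ := fun a => a + t * u₀ a with hξdef
  have hξderiv : ∀ a : ℝ, HasDerivAt ξ (1 + t * deriv u₀ a) a := fun a =>
    (hasDerivAt_id a).add ((hdiff a).hasDerivAt.const_mul t)
  have hξcont : Continuous ξ := continuous_id.add (continuous_const.mul hC1.continuous)
  have hξderiv' : ∀ a : ℝ, deriv ξ a = 1 + t * deriv u₀ a := fun a => (hξderiv a).deriv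
  -- strict monotonicity on the two half-lines
  have hmono_m : StrictMonoOn ξ (Set.Iic am) := by
    apply strictMonoOn_of_deriv_pos (convex_Iic am) hξcont.continuousOn
    intro x hx
    rw [interior_Iic] at hx
    rw [hξderiv' x]
    exact hpos x (fun h => absurd h.1 (not_lt.2 hx.le))
  have hmono_p : StrictMonoOn ξ (Set.Ici ap) := by
    apply strictMonoOn_of_deriv_pos (convex_Ici ap) hξcont.continuousOn
    intro x hx
    rw [interior_Ici] at hx
    rw [hξderiv' x]
    exact hpos x (fun h => absurd h.2 (not_lt.2 hx.le))
  have hξam : ξ am = xs := hendm.symm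
  have hξap : ξ ap = xs := hendp.symm
  have hbotlim : Filter.Tendsto ξ Filter.atBot Filter.atBot := by
    simpa [hξdef, add_comm] using (hbot.const_mul t).add_atBot Filter.tendsto_id
  have htoplim : Filter.Tendsto ξ Filter.atTop Filter.atTop := by
    simpa [hξdef, add_comm] using (htop.const_mul t).add_atTop Filter.tendsto_id
  have himg_m : ξ '' Set.Iic am = Set.Iic xs := by
    apply Set.eq_of_subset_of_subset
    · rintro _ ⟨a, ha, rfl⟩
      rcases eq_or_lt_of_le (Set.mem_Iic.mp ha) with rfl | h
      · exact le_of_eq hξam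
      · exact le_of_lt (hξam ▸ hmono_m h.le Set.self_mem_Iic h)
    · intro y hy
      obtain ⟨a₀, hya, ha₀⟩ :
          ∃ a₀, ξ a₀ ≤ y ∧ a₀ ≤ am :=
        ((hbotlim.eventually (Filter.eventually_le_atBot y)).and
          (Filter.eventually_le_atBot am)).exists
      have : y ∈ Set.Icc (ξ a₀) (ξ am) := ⟨hya, hξam ▸ hy⟩
      obtain ⟨a, haIcc, hay⟩ := intermediate_value_Icc ha₀ hξcont.continuousOn this
      exact ⟨a, haIcc.2, hay⟩
  have himg_p : ξ '' Set.Ici ap = Set.Ici xs := by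
    apply Set.eq_of_subset_of_subset
    · rintro _ ⟨a, ha, rfl⟩
      rcases eq_or_lt_of_le (Set.mem_Ici.mp ha) with rfl | h
      · exact le_of_eq hξap.symm
      · exact le_of_lt (hξap ▸ hmono_p Set.self_mem_Ici h.le h)
    · intro y hy
      obtain ⟨a₀, hya, ha₀⟩ :
          ∃ a₀, y ≤ ξ a₀ ∧ ap ≤ a₀ :=
        ((htoplim.eventually (Filter.eventually_ge_atTop y)).and
          (Filter.eventually_ge_atTop ap)).exists
      have : y ∈ Set.Icc (ξ ap) (ξ a₀) := ⟨hξap ▸ hy, hya⟩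
      obtain ⟨a, haIcc, hay⟩ := intermediate_value_Icc ha₀ hξcont.continuousOn this
      exact ⟨a, haIcc.1, hay⟩
  refine ⟨hmono_m, himg_m, hmono_p, himg_p, ?_⟩
  intro u hu
  -- boundedness of ψ ∘ u₀
  obtain ⟨M, hM⟩ := hbdd
  obtain ⟨C, hC⟩ : ∃ C, ∀ a, |ψ (u₀ a)| ≤ C := by
    obtain ⟨C, hC⟩ := (isCompact_Icc (a := -M) (b := M)).exists_bound_of_continuousOn
      hψ.continuousOn
    refine ⟨C, fun a => ?_⟩
    have := abs_le.mp (hM a)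
    simpa [Real.norm_eq_abs] using hC (u₀ a) ⟨this.1, this.2⟩
  have hprod : Integrable (fun a => ψ (u₀ a) * deriv u₀ a) :=
    hint.bdd_mul (c := C) (hψ.comp hC1.continuous).aestronglyMeasurable
      (Filter.Eventually.of_forall fun a => by simpa [Real.norm_eq_abs] using hC a)
  have hcomb : Integrable (fun a => (1 + t * deriv u₀ a) * ψ (u₀ a)) := by
    refine (hψint.add (hprod.const_mul t)).congr (Filter.Eventually.of_forall fun a => ?_)
    simp only [Pi.add_apply]
    ring
  have hne : ∀ b : ℝ, ∀ᵐ a : ℝ, a ≠ b := fun b => by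
    rw [Filter.Eventually, MeasureTheory.mem_ae_iff]
    simpa using measure_singleton b
  have hmeasIic : MeasurableSet (Set.Iic am) := measurableSet_Iic
  have hmeasIci : MeasurableSet (Set.Ici ap) := measurableSet_Ici
  have hd_m : ∀ a ∈ Set.Iic am, HasDerivWithinAt ξ (1 + t * deriv u₀ a) (Set.Iic am) a :=
    fun a _ => (hξderiv a).hasDerivWithinAt
  have hd_p : ∀ a ∈ Set.Ici ap, HasDerivWithinAt ξ (1 + t * deriv u₀ a) (Set.Ici ap) a :=
    fun a _ => (hξderiv a).hasDerivWithinAt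
  have hae_m : (fun a => |1 + t * deriv u₀ a| • ψ (u (ξ a)))
      =ᵐ[volume.restrict (Set.Iic am)] (fun a => (1 + t * deriv u₀ a) * ψ (u₀ a)) := by
    refine (ae_restrict_iff' hmeasIic).2 ?_
    filter_upwards [hne am] with a hane ha
    have haam : a < am := lt_of_le_of_ne ha hane
    have hp := hpos a (fun h => absurd h.1 (not_lt.2 haam.le))
    simp only [hξdef]
    rw [hu a (Or.inl haam), smul_eq_mul, abs_of_pos hp]
  have hae_p : (fun a => |1 + t * deriv u₀ a| • ψ (u (ξ a)))
      =ᵐ[volume.restrict (Set.Ici ap)] (fun a => (1 + t * deriv u₀ a) * ψ (u₀ a)) := by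
    refine (ae_restrict_iff' hmeasIci).2 ?_
    filter_upwards [hne ap] with a hane ha
    have hapa : ap < a := lt_of_le_of_ne ha (Ne.symm hane)
    have hp := hpos a (fun h => absurd h.2 (not_lt.2 hapa.le))
    simp only [hξdef]
    rw [hu a (Or.inr hapa), smul_eq_mul, abs_of_pos hp]
  have key_m : ∫ x in Set.Iic xs, ψ (u x)
      = ∫ a in Set.Iic am, (1 + t * deriv u₀ a) * ψ (u₀ a) := by
    rw [← himg_m, integral_image_eq_integral_abs_deriv_smul hmeasIic hd_m hmono_m.injOn]
    exact integral_congr_ae hae_m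
  have key_p : ∫ x in Set.Ici xs, ψ (u x)
      = ∫ a in Set.Ici ap, (1 + t * deriv u₀ a) * ψ (u₀ a) := by
    rw [← himg_p, integral_image_eq_integral_abs_deriv_smul hmeasIci hd_p hmono_p.injOn]
    exact integral_congr_ae hae_p
  have hInt_m : IntegrableOn (fun x => ψ (u x)) (Set.Iic xs) := by
    rw [← himg_m, integrableOn_image_iff_integrableOn_abs_deriv_smul hmeasIic hd_m hmono_m.injOn]
    exact hcomb.integrableOn.congr hae_m.symm
  have hInt_p : IntegrableOn (fun x => ψ (u x)) (Set.Ici xs) := by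
    rw [← himg_p, integrableOn_image_iff_integrableOn_abs_deriv_smul hmeasIci hd_p hmono_p.injOn]
    exact hcomb.integrableOn.congr hae_p.symm
  have hInt : Integrable fun x => ψ (u x) := by
    rw [← integrableOn_univ, ← Set.Iic_union_Ici (a := xs)]
    exact hInt_m.union hInt_p
  -- splitting of integrals
  have hsplitL : (∫ x, ψ (u x)) = (∫ x in Set.Iic xs, ψ (u x)) + ∫ x in Set.Ici xs, ψ (u x) := by
    rw [integral_Ici_eq_integral_Ioi, ← setIntegral_union (Set.Iic_disjoint_Ioi le_rfl)
      measurableSet_Ioi hInt_m (hInt.integrableOn), Set.Iic_union_Ioi, setIntegral_univ]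
  have hsplitR : (∫ a, ψ (u₀ a)) = (∫ a in Set.Iic am, ψ (u₀ a))
      + ((∫ a in Set.Ioc am ap, ψ (u₀ a)) + ∫ a in Set.Ioi ap, ψ (u₀ a)) := by
    rw [← setIntegral_union (Set.Ioc_disjoint_Ioi le_rfl) measurableSet_Ioi
      hψint.integrableOn hψint.integrableOn, Set.Ioc_union_Ioi_eq_Ioi hlt.le,
      ← setIntegral_union (Set.Iic_disjoint_Ioi le_rfl) measurableSet_Ioi
      hψint.integrableOn hψint.integrableOn, Set.Iic_union_Ioi, setIntegral_univ]
  -- linearity on each half line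
  have hlin_m : ∫ a in Set.Iic am, (1 + t * deriv u₀ a) * ψ (u₀ a)
      = (∫ a in Set.Iic am, ψ (u₀ a)) + t * ∫ a in Set.Iic am, ψ (u₀ a) * deriv u₀ a := by
    rw [← MeasureTheory.integral_const_mul, ← integral_add hψint.integrableOn
      (hprod.const_mul t).integrableOn]
    exact setIntegral_congr_fun hmeasIic fun a _ => by ring
  have hlin_p : ∫ a in Set.Ici ap, (1 + t * deriv u₀ a) * ψ (u₀ a)
      = (∫ a in Set.Ici ap, ψ (u₀ a)) + t * ∫ a in Set.Ici ap, ψ (u₀ a) * deriv u₀ a := by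
    rw [← MeasureTheory.integral_const_mul, ← integral_add hψint.integrableOn
      (hprod.const_mul t).integrableOn]
    exact setIntegral_congr_fun hmeasIci fun a _ => by ring
  -- fundamental theorem of calculus on half lines
  have hΨd : ∀ v : ℝ, HasDerivAt (fun w => ∫ s in (0:ℝ)..w, ψ s) (ψ v) v := fun v =>
    intervalIntegral.integral_hasDerivAt_right (hψ.intervalIntegrable 0 v)
      (hψ.stronglyMeasurableAtFilter _ _) hψ.continuousAt
  have hFd : ∀ a : ℝ, HasDerivAt (fun b => ∫ s in (0:ℝ)..(u₀ b), ψ s)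
      (ψ (u₀ a) * deriv u₀ a) a := fun a => (hΨd (u₀ a)).comp a (hdiff a).hasDerivAt
  have hFbot : Filter.Tendsto (fun b => ∫ s in (0:ℝ)..(u₀ b), ψ s) Filter.atBot
      (nhds (∫ s in (0:ℝ)..uinf, ψ s)) := (hΨd uinf).continuousAt.tendsto.comp hbot
  have hFtop : Filter.Tendsto (fun b => ∫ s in (0:ℝ)..(u₀ b), ψ s) Filter.atTop
      (nhds (∫ s in (0:ℝ)..uinf, ψ s)) := (hΨd uinf).continuousAt.tendsto.comp htop
  have hB_m : ∫ a in Set.Iic am, ψ (u₀ a) * deriv u₀ a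
      = (∫ s in (0:ℝ)..(u₀ am), ψ s) - ∫ s in (0:ℝ)..uinf, ψ s :=
    integral_Iic_of_hasDerivAt_of_tendsto' (fun x _ => hFd x) hprod.integrableOn hFbot
  have hB_p : ∫ a in Set.Ioi ap, ψ (u₀ a) * deriv u₀ a
      = (∫ s in (0:ℝ)..uinf, ψ s) - ∫ s in (0:ℝ)..(u₀ ap), ψ s :=
    integral_Ioi_of_hasDerivAt_of_tendsto' (fun x _ => hFd x) hprod.integrableOn hFtop
  have hΨdiff : (∫ s in (0:ℝ)..(u₀ am), ψ s) - (∫ s in (0:ℝ)..(u₀ ap), ψ s)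
      = ∫ v in (u₀ ap)..(u₀ am), ψ v :=
    intervalIntegral.integral_interval_sub_left (hψ.intervalIntegrable _ _)
      (hψ.intervalIntegrable _ _)
  refine ⟨hInt, ?_⟩
  rw [hsplitL, hsplitR, key_m, key_p, hlin_m, hlin_p, intervalIntegral.integral_of_le hlt.le,
    ← hΨdiff, hB_m, integral_Ici_eq_integral_Ioi, integral_Ici_eq_integral_Ioi, hB_p]
  ring
end

section
/- Let 0 < t_* ≤ t_f, let u₀: ℝ → ℝ be continuous, and let x_*, a₋, a₊: [t_*, t_f] → ℝ be continuously differentiable with a₋(s) < a₊(s) for all s, a₋ nonincreasing and a₊ nondecreasing. Assume the endpoint relations x_*(s) = a₋(s) + s·u₀(a₋(s)) = a₊(s) + s·u₀(a₊(s)) and the average condition x_*'(s) = (1/(a₊(s) − a₋(s)))·∫_{a₋(s)}^{a₊(s)} (x_*(s) − a)/s · da for all s ∈ [t_*, t_f]. Let ψ: ℝ → ℝ be convex and differentiable, and define Δ_ψ(s) = ∫_{a₋(s)}^{a₊(s)} ψ((x_*(s) − a)/s) da + ∫_{a₋(t_f)}^{a₋(s)} ψ(u₀(a)) da + ∫_{a₊(s)}^{a₊(t_f)}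 ψ(u₀(a)) da. Then Δ_ψ is nonincreasing on [t_*, t_f]; moreover Δ_ψ(t_f) = t_f·∫_{u₊(t_f)}^{u₋(t_f)} ψ(v) dv, where u₋(s) := u₀(a₋(s)) and u₊(s) := u₀(a₊(s)), so that t_f·∫_{u₊(t_f)}^{u₋(t_f)} ψ(v) dv ≤ Δ_ψ(t_*). In particular, a weak solution of inviscid Burgers whose shock satisfies the average condition dissipates every convex entropy. -/
open intervalIntegral MeasureTheory

private lemma ftc_aux {f : ℝ → ℝ} (hf : Continuous f) (u : ℝ) :
    HasDerivAt (fun x => ∫ v in (0:ℝ)..x, f v) (f u) u :=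
  integral_hasDerivAt_right (hf.intervalIntegrable 0 u)
    hf.stronglyMeasurable.stronglyMeasurableAtFilter hf.continuousAt

private lemma subst_aux (ψ : ℝ → ℝ) {t : ℝ} (ht : t ≠ 0) (c a b : ℝ) :
    (∫ x in a..b, ψ ((c - x) / t)) = t * ∫ v in (c - b)/t..(c - a)/t, ψ v := by
  have h1 := intervalIntegral.integral_comp_sub_left (a := a) (b := b) (fun y => ψ (y / t)) c
  rw [h1, intervalIntegral.integral_comp_div (fun v => ψ v) ht, smul_eq_mul]

private lemma trapezoid_aux {ψ : ℝ → ℝ} (hconv : ConvexOn ℝ Set.univ ψ) (hc : Continuous ψ)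
    {p m : ℝ} (hpm : p ≤ m) :
    (∫ v in p..m, ψ v) ≤ (m - p) * (ψ p + ψ m) / 2 := by
  rcases eq_or_lt_of_le hpm with h | h
  · subst h; simp
  have hd : (0:ℝ) < m - p := sub_pos.2 h
  have hle : ∀ v ∈ Set.Icc p m, ψ v ≤ ((m - v) * ψ p + (v - p) * ψ m) / (m - p) := by
    intro v hv
    have h1 : (0:ℝ) ≤ (m - v)/(m - p) := div_nonneg (by linarith [hv.2]) hd.le
    have h2 : (0:ℝ) ≤ (v - p)/(m - p) := div_nonneg (by linarith [hv.1]) hd.le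
    have h3 : (m - v)/(m - p) + (v - p)/(m - p) = 1 := by field_simp; ring
    have hcv := hconv.2 (Set.mem_univ p) (Set.mem_univ m) h1 h2 h3
    have hv' : ((m - v)/(m - p)) • p + ((v - p)/(m - p)) • m = v := by
      simp only [smul_eq_mul]; field_simp; ring
    rw [hv'] at hcv
    calc ψ v ≤ (m - v)/(m - p) * ψ p + (v - p)/(m - p) * ψ m := hcv
      _ = ((m - v) * ψ p + (v - p) * ψ m) / (m - p) := by ring
  have hmono := intervalIntegral.integral_mono_on (μ := volume) hpm (hc.intervalIntegrable p m)
    (Continuous.intervalIntegrable (by continuity) p m) hle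
  refine hmono.trans (le_of_eq ?_)
  have heq : (∫ v in p..m, ((m - v) * ψ p + (v - p) * ψ m) / (m - p))
      = ∫ v in p..m, ((m * ψ p - p * ψ m) / (m - p) + v * ((ψ m - ψ p)/(m - p))) := by
    apply intervalIntegral.integral_congr; intro v _; field_simp; ring
  rw [heq, intervalIntegral.integral_add intervalIntegrable_const
    (Continuous.intervalIntegrable (by continuity) p m),
    intervalIntegral.integral_const, intervalIntegral.integral_mul_const, integral_id,
    smul_eq_mul]
  field_simp
  ring

/-- Dissipation of every convex entropy by a Burgers shock satisfying the average
(Maxwell/Rankine–Hugoniot) condition: the interpolating functional `Δ_ψ` is nonincreasing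
on `[t_*, t_f]`, its final value equals `t_f·∫_{u₊(t_f)}^{u₋(t_f)} ψ(v) dv`, and therefore
`t_f·∫_{u₊(t_f)}^{u₋(t_f)} ψ(v) dv ≤ Δ_ψ(t_*)`. -/
theorem convex_entropy_dissipation
    (tstar tf : ℝ) (u₀ xs am ap : ℝ → ℝ) (ψ : ℝ → ℝ) (Δ : ℝ → ℝ)
    (htstar : 0 < tstar) (htf : tstar ≤ tf)
    (hu₀ : Continuous u₀)
    (hxs : ContDiffOn ℝ 1 xs (Set.Icc tstar tf))
    (ham : ContDiffOn ℝ 1 am (Set.Icc tstar tf))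
    (hap : ContDiffOn ℝ 1 ap (Set.Icc tstar tf))
    (hlt : ∀ s ∈ Set.Icc tstar tf, am s < ap s)
    (hmono_m : AntitoneOn am (Set.Icc tstar tf))
    (hmono_p : MonotoneOn ap (Set.Icc tstar tf))
    (hend_m : ∀ s ∈ Set.Icc tstar tf, xs s = am s + s * u₀ (am s))
    (hend_p : ∀ s ∈ Set.Icc tstar tf, xs s = ap s + s * u₀ (ap s))
    (havg : ∀ s ∈ Set.Icc tstar tf,
      derivWithin xs (Set.Icc tstar tf) s
        = (1 / (ap s - am s)) * ∫ a in (am s)..(ap s), (xs s - a) / s)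
    (hψconv : ConvexOn ℝ Set.univ ψ)
    (hψdiff : Differentiable ℝ ψ)
    (hΔ : ∀ s : ℝ, Δ s = (∫ a in (am s)..(ap s), ψ ((xs s - a) / s))
        + (∫ a in (am tf)..(am s), ψ (u₀ a))
        + (∫ a in (ap s)..(ap tf), ψ (u₀ a))) :
    AntitoneOn Δ (Set.Icc tstar tf) ∧
    Δ tf = tf * ∫ v in (u₀ (ap tf))..(u₀ (am tf)), ψ v ∧
    tf * (∫ v in (u₀ (ap tf))..(u₀ (am tf)), ψ v) ≤ Δ tstar := by
  have hψc : Continuous ψ := hψdiff.continuous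
  have htf0 : (0:ℝ) < tf := lt_of_lt_of_le htstar htf
  set Ψ : ℝ → ℝ := fun u => ∫ v in (0:ℝ)..u, ψ v with hΨdef
  set Θ : ℝ → ℝ := fun x => ∫ a in (0:ℝ)..x, ψ (u₀ a) with hΘdef
  have hΨ : ∀ u, HasDerivAt Ψ (ψ u) u := fun u => ftc_aux hψc u
  have hΘ : ∀ x, HasDerivAt Θ (ψ (u₀ x)) x := fun x => ftc_aux (hψc.comp hu₀) x
  have hΨdiff : Differentiable ℝ Ψ := fun u => (hΨ u).differentiableAt
  have hΘdiff : Differentiable ℝ Θ := fun u => (hΘ u).differentiableAt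
  have hΨcont : Continuous Ψ := hΨdiff.continuous
  have hΘcont : Continuous Θ := hΘdiff.continuous
  have hΨsub : ∀ a b : ℝ, Ψ b - Ψ a = ∫ v in a..b, ψ v := fun a b =>
    intervalIntegral.integral_interval_sub_left (hψc.intervalIntegrable 0 b)
      (hψc.intervalIntegrable 0 a)
  have hΘsub : ∀ a b : ℝ, Θ b - Θ a = ∫ x in a..b, ψ (u₀ x) := fun a b =>
    intervalIntegral.integral_interval_sub_left ((hψc.comp hu₀).intervalIntegrable 0 b)
      ((hψc.comp hu₀).intervalIntegrable 0 a)
  set G : ℝ → ℝ := fun s =>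
    s * (Ψ ((xs s - am s)/s) - Ψ ((xs s - ap s)/s))
      + ((Θ (am s) - Θ (am tf)) + (Θ (ap tf) - Θ (ap s))) with hGdef
  -- Δ = G on the interval
  have hΔG : ∀ s ∈ Set.Icc tstar tf, Δ s = G s := by
    intro s hs
    have hs0 : s ≠ 0 := ne_of_gt (lt_of_lt_of_le htstar hs.1)
    rw [hΔ s, subst_aux ψ hs0 (xs s) (am s) (ap s), hGdef]
    simp only
    rw [hΨsub, hΘsub, hΘsub]
    ring
  -- continuity of G on the interval
  have hamc : ContinuousOn am (Set.Icc tstar tf) := ham.continuousOn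
  have hapc : ContinuousOn ap (Set.Icc tstar tf) := hap.continuousOn
  have hxsc : ContinuousOn xs (Set.Icc tstar tf) := hxs.continuousOn
  have hsne : ∀ s ∈ Set.Icc tstar tf, s ≠ 0 := fun s hs =>
    ne_of_gt (lt_of_lt_of_le htstar hs.1)
  have hGc : ContinuousOn G (Set.Icc tstar tf) := by
    apply ContinuousOn.add
    · exact continuousOn_id.mul
        (((hΨcont.comp_continuousOn ((hxsc.sub hamc).div continuousOn_id hsne))).sub
          (hΨcont.comp_continuousOn ((hxsc.sub hapc).div continuousOn_id hsne)))
    · exact (((hΘcont.comp_continuousOn hamc).sub continuousOn_const).add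
        (continuousOn_const.sub (hΘcont.comp_continuousOn hapc)))
  -- derivative of G is nonpositive on the interior
  have key : ∀ s ∈ Set.Ioo tstar tf, ∃ d, d ≤ 0 ∧ HasDerivAt G d s := by
    intro s hs
    have hsI : s ∈ Set.Icc tstar tf := Set.Ioo_subset_Icc_self hs
    have hspos : (0:ℝ) < s := lt_of_lt_of_le htstar hsI.1
    have hsn : s ≠ 0 := ne_of_gt hspos
    have hnhds : Set.Icc tstar tf ∈ nhds s := Icc_mem_nhds hs.1 hs.2
    have hxd : HasDerivAt xs (deriv xs s) s :=
      (((hxs.differentiableOn one_ne_zero) s hsI).differentiableAt hnhds).hasDerivAt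
    have hamd : HasDerivAt am (deriv am s) s :=
      (((ham.differentiableOn one_ne_zero) s hsI).differentiableAt hnhds).hasDerivAt
    have hapd : HasDerivAt ap (deriv ap s) s :=
      (((hap.differentiableOn one_ne_zero) s hsI).differentiableAt hnhds).hasDerivAt
    have hBA : ap s - am s ≠ 0 := ne_of_gt (sub_pos.2 (hlt s hsI))
    -- endpoint relations
    have hmval : u₀ (am s) = (xs s - am s)/s := by
      rw [eq_div_iff hsn]; linear_combination -(hend_m s hsI)
    have hpval : u₀ (ap s) = (xs s - ap s)/s := by
      rw [eq_div_iff hsn]; linear_combination -(hend_p s hsI)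
    -- the average condition at s
    have havg' : deriv xs s = ((xs s - am s)/s + (xs s - ap s)/s) / 2 := by
      have h0 := havg s hsI
      rw [derivWithin_of_mem_nhds hnhds] at h0
      have hint : (∫ a in (am s)..(ap s), (xs s - a)/s)
          = ((ap s - am s) * xs s - ((ap s)^2 - (am s)^2)/2) / s := by
        rw [intervalIntegral.integral_div]
        congr 1
        rw [intervalIntegral.integral_sub intervalIntegrable_const intervalIntegrable_id,
          intervalIntegral.integral_const, integral_id, smul_eq_mul]
      rw [hint] at h0
      rw [h0]
      field_simp
      ring
    -- chain rule pieces
    have hM : HasDerivAt (fun r => (xs r - am r)/r)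
        (((deriv xs s - deriv am s) * s - (xs s - am s) * 1) / s^2) s :=
      (hxd.sub hamd).div (hasDerivAt_id s) hsn
    have hP : HasDerivAt (fun r => (xs r - ap r)/r)
        (((deriv xs s - deriv ap s) * s - (xs s - ap s) * 1) / s^2) s :=
      (hxd.sub hapd).div (hasDerivAt_id s) hsn
    have h1 := HasDerivAt.comp (h := fun r => (xs r - am r)/r) s (hΨ ((xs s - am s)/s)) hM
    have h2 := HasDerivAt.comp (h := fun r => (xs r - ap r)/r) s (hΨ ((xs s - ap s)/s)) hP
    have h3 := HasDerivAt.comp (h := am) s (hΘ (am s)) hamd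
    have h4 := HasDerivAt.comp (h := ap) s (hΘ (ap s)) hapd
    have hG : HasDerivAt G
        ((1 * (Ψ ((xs s - am s)/s) - Ψ ((xs s - ap s)/s))
          + s * (ψ ((xs s - am s)/s) * (((deriv xs s - deriv am s) * s - (xs s - am s) * 1) / s^2)
            - ψ ((xs s - ap s)/s) * (((deriv xs s - deriv ap s) * s - (xs s - ap s) * 1) / s^2)))
          + ((ψ (u₀ (am s)) * deriv am s - 0) + (0 - ψ (u₀ (ap s)) * deriv ap s))) s := by
      exact ((hasDerivAt_id s).mul (h1.sub h2)).add
        (((h3.sub (hasDerivAt_const s (Θ (am tf)))).add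
          ((hasDerivAt_const s (Θ (ap tf))).sub h4)))
    refine ⟨_, ?_, hG⟩
    -- show nonpositivity of the derivative
    have hpm : (xs s - ap s)/s ≤ (xs s - am s)/s := by
      apply div_le_div_of_nonneg_right (by linarith [hlt s hsI]) hspos.le
    have htrap := trapezoid_aux hψconv hψc hpm
    have hdeq : (1 * (Ψ ((xs s - am s)/s) - Ψ ((xs s - ap s)/s))
          + s * (ψ ((xs s - am s)/s) * (((deriv xs s - deriv am s) * s - (xs s - am s) * 1) / s^2)
            - ψ ((xs s - ap s)/s) * (((deriv xs s - deriv ap s) * s - (xs s - ap s) * 1) / s^2)))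
          + ((ψ (u₀ (am s)) * deriv am s - 0) + (0 - ψ (u₀ (ap s)) * deriv ap s))
        = (∫ v in ((xs s - ap s)/s)..((xs s - am s)/s), ψ v)
          - ((xs s - am s)/s - (xs s - ap s)/s)
            * (ψ ((xs s - ap s)/s) + ψ ((xs s - am s)/s)) / 2 := by
      rw [hmval, hpval, hΨsub, havg']
      field_simp
      ring
    rw [hdeq]
    linarith [htrap]
  have hGanti : AntitoneOn G (Set.Icc tstar tf) := by
    apply antitoneOn_of_deriv_nonpos (convex_Icc _ _) hGc
    · rw [interior_Icc]
      intro s hs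
      obtain ⟨d, _, hd⟩ := key s hs
      exact hd.differentiableAt.differentiableWithinAt
    · rw [interior_Icc]
      intro s hs
      obtain ⟨d, hd0, hd⟩ := key s hs
      rw [hd.deriv]; exact hd0
  have hanti : AntitoneOn Δ (Set.Icc tstar tf) := by
    intro a ha b hb hab
    rw [hΔG a ha, hΔG b hb]
    exact hGanti ha hb hab
  have htfI : tf ∈ Set.Icc tstar tf := ⟨htf, le_rfl⟩
  have htfn : tf ≠ 0 := ne_of_gt htf0
  have e1 : (xs tf - am tf)/tf = u₀ (am tf) := by
    rw [div_eq_iff htfn]; linear_combination (hend_m tf htfI)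
  have e2 : (xs tf - ap tf)/tf = u₀ (ap tf) := by
    rw [div_eq_iff htfn]; linear_combination (hend_p tf htfI)
  have hfin : Δ tf = tf * ∫ v in (u₀ (ap tf))..(u₀ (am tf)), ψ v := by
    rw [hΔ tf, intervalIntegral.integral_same, intervalIntegral.integral_same, add_zero,
      add_zero, subst_aux ψ htfn (xs tf) (am tf) (ap tf), e1, e2]
  refine ⟨hanti, hfin, ?_⟩
  rw [← hfin]
  exact hanti ⟨le_rfl, htf⟩ htfI htf
end

section
/- Let 0 < t_* < t_f, let u₀: ℝ → ℝ be continuous, and let x_*, a₋, a₊: [t_*, t_f] → ℝ be continuously differentiable with a₋(s) < a₊(s), satisfying the endpoint relations x_*(s) = a₋(s) + s·u₀(a₋(s)) = a₊(s) + s·u₀(a₊(s)) for all s. Let ψ: ℝ → ℝ be continuously differentiable, and define Δ_ψ(s) = ∫_{a₋(s)}^{a₊(s)} ψ((x_*(s) − a)/s) da + ∫_{a₋(t_f)}^{a₋(s)} ψ(u₀(a)) da + ∫_{a₊(s)}^{a₊(t_f)} ψ(u₀(a)) da. Then Δ_ψ is differentiable on (t_*, t_f) and its derivative is given by d/ds Δ_ψ(s)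 = (1/s)·∫_{a₋(s)}^{a₊(s)} ψ'((x_*(s) − a)/s)·( x_*'(s) − (x_*(s) − a)/s ) da; i.e. the boundary terms arising from the moving endpoints a_±(s) cancel exactly because (x_*(s) − a_±(s))/s = u₀(a_±(s)). -/
/-- Closed form for the integral of `ψ ((X - a)/s)` via the antiderivative
`a ↦ -s * Ψ ((X - a)/s)` where `Ψ y = ∫ t in 0..y, ψ t`. -/
lemma psi_int_closed (ψ : ℝ → ℝ) (hψ : Continuous ψ) (s X b c : ℝ) (hs : s ≠ 0) :
    ∫ a in b..c, ψ ((X - a) / s)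
      = s * (∫ t in (0:ℝ)..((X - b)/s), ψ t) - s * (∫ t in (0:ℝ)..((X - c)/s), ψ t) := by
  set Ψ : ℝ → ℝ := fun y => ∫ t in (0:ℝ)..y, ψ t with hΨdef
  have hΨ : ∀ x, HasDerivAt Ψ (ψ x) x := fun x =>
    intervalIntegral.integral_hasDerivAt_right (hψ.intervalIntegrable _ _)
      (hψ.stronglyMeasurableAtFilter _ _) hψ.continuousAt
  have key : ∫ a in b..c, ψ ((X - a)/s)
      = (fun a => -s * Ψ ((X - a)/s)) c - (fun a => -s * Ψ ((X - a)/s)) b := by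
    apply intervalIntegral.integral_eq_sub_of_hasDerivAt
    · intro a _
      have hw : HasDerivAt (fun a : ℝ => (X - a)/s) (-1/s) a :=
        ((hasDerivAt_id a).const_sub X).div_const s
      have h2 := ((hΨ _).comp a hw).const_mul (-s)
      convert h2 using 1
      · rfl
      · rfl
      field_simp
    · exact (hψ.comp (by fun_prop)).intervalIntegrable _ _
  simp only at key
  rw [key]; ring

/-- Closed form for the integral of `deriv ψ ((X - a)/s) * (D - (X - a)/s)`. -/
lemma psi'_int_closed (ψ : ℝ → ℝ) (hψ : ContDiff ℝ 1 ψ) (s X D b c : ℝ) (hs : s ≠ 0) :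
    ∫ a in b..c, deriv ψ ((X - a)/s) * (D - (X - a)/s)
      = (-s * D * ψ ((X - c)/s)
          + s * (((X - c)/s) * ψ ((X - c)/s) - ∫ t in (0:ℝ)..((X - c)/s), ψ t))
        - (-s * D * ψ ((X - b)/s)
          + s * (((X - b)/s) * ψ ((X - b)/s) - ∫ t in (0:ℝ)..((X - b)/s), ψ t)) := by
  have hψc := hψ.continuous
  have hψ'c : Continuous (deriv ψ) := hψ.continuous_deriv le_rfl
  set Ψ : ℝ → ℝ := fun y => ∫ t in (0:ℝ)..y, ψ t with hΨdef
  have hΨ : ∀ x, HasDerivAt Ψ (ψ x) x := fun x =>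
    intervalIntegral.integral_hasDerivAt_right (hψc.intervalIntegrable _ _)
      (hψc.stronglyMeasurableAtFilter _ _) hψc.continuousAt
  have hψd : ∀ x, HasDerivAt ψ (deriv ψ x) x := fun x =>
    (hψ.differentiable one_ne_zero x).hasDerivAt
  have key : ∫ a in b..c, deriv ψ ((X - a)/s) * (D - (X - a)/s)
      = (fun a => -s * D * ψ ((X - a)/s)
          + s * (((X - a)/s) * ψ ((X - a)/s) - Ψ ((X - a)/s))) c
        - (fun a => -s * D * ψ ((X - a)/s)
          + s * (((X - a)/s) * ψ ((X - a)/s) - Ψ ((X - a)/s))) b := by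
    apply intervalIntegral.integral_eq_sub_of_hasDerivAt
    · intro a _
      have hw : HasDerivAt (fun a : ℝ => (X - a)/s) (-1/s) a :=
        ((hasDerivAt_id a).const_sub X).div_const s
      have h1 : HasDerivAt (fun a : ℝ => ψ ((X - a)/s))
          (deriv ψ ((X - a)/s) * (-1/s)) a := (hψd _).comp a hw
      have h2 : HasDerivAt (fun a : ℝ => Ψ ((X - a)/s))
          (ψ ((X - a)/s) * (-1/s)) a := (hΨ _).comp a hw
      have h3 := ((h1.const_mul (-s * D)).add
        (((hw.mul h1).sub h2).const_mul s))
      convert h3 using 1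
      · rfl
      field_simp
      ring
    · apply Continuous.intervalIntegrable
      exact (hψ'c.comp (by fun_prop)).mul (by fun_prop)
  simp only at key
  rw [key]

/-- Differentiation of the interpolating functional `Δ_ψ` along a Burgers shock: the
boundary terms from the moving endpoints `a_±(s)` cancel because
`(x_*(s) − a_±(s))/s = u₀(a_±(s))`, leaving
`Δ_ψ'(s) = (1/s)·∫_{a₋(s)}^{a₊(s)} ψ'((x_*(s)−a)/s)·(x_*'(s) − (x_*(s)−a)/s) da`. -/
theorem delta_psi_derivative
    (tstar tf : ℝ) (u₀ xs am ap : ℝ → ℝ) (ψ : ℝ → ℝ) (Δ : ℝ → ℝ)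
    (htstar : 0 < tstar) (htf : tstar < tf)
    (hu₀ : Continuous u₀)
    (hxs : ContDiffOn ℝ 1 xs (Set.Icc tstar tf))
    (ham : ContDiffOn ℝ 1 am (Set.Icc tstar tf))
    (hap : ContDiffOn ℝ 1 ap (Set.Icc tstar tf))
    (hlt : ∀ s ∈ Set.Icc tstar tf, am s < ap s)
    (hend_m : ∀ s ∈ Set.Icc tstar tf, xs s = am s + s * u₀ (am s))
    (hend_p : ∀ s ∈ Set.Icc tstar tf, xs s = ap s + s * u₀ (ap s))
    (hψ : ContDiff ℝ 1 ψ)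
    (hΔ : ∀ s : ℝ, Δ s = (∫ a in (am s)..(ap s), ψ ((xs s - a) / s))
        + (∫ a in (am tf)..(am s), ψ (u₀ a))
        + (∫ a in (ap s)..(ap tf), ψ (u₀ a))) :
    ∀ s ∈ Set.Ioo tstar tf,
      HasDerivAt Δ
        ((1 / s) * ∫ a in (am s)..(ap s),
          deriv ψ ((xs s - a) / s) * (deriv xs s - (xs s - a) / s)) s := by
  intro s hs
  have hsIcc : s ∈ Set.Icc tstar tf := ⟨hs.1.le, hs.2.le⟩
  have hspos : 0 < s := htstar.trans hs.1
  have hs0 : s ≠ 0 := hspos.ne'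
  have hnhds : Set.Icc tstar tf ∈ nhds s := Icc_mem_nhds hs.1 hs.2
  have hψc := hψ.continuous
  set Ψ : ℝ → ℝ := fun y => ∫ t in (0:ℝ)..y, ψ t with hΨdef
  have hΨ : ∀ x, HasDerivAt Ψ (ψ x) x := fun x =>
    intervalIntegral.integral_hasDerivAt_right (hψc.intervalIntegrable _ _)
      (hψc.stronglyMeasurableAtFilter _ _) hψc.continuousAt
  -- derivatives of am, ap, xs at s
  have hamD : HasDerivAt am (deriv am s) s :=
    ((ham.differentiableOn one_ne_zero).differentiableAt hnhds).hasDerivAt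
  have hapD : HasDerivAt ap (deriv ap s) s :=
    ((hap.differentiableOn one_ne_zero).differentiableAt hnhds).hasDerivAt
  have hxsD : HasDerivAt xs (deriv xs s) s :=
    ((hxs.differentiableOn one_ne_zero).differentiableAt hnhds).hasDerivAt
  -- the "velocity" functions
  have hvm : HasDerivAt (fun t => (xs t - am t) / t)
      (((deriv xs s - deriv am s) * s - (xs s - am s) * 1) / s ^ 2) s :=
    (hxsD.sub hamD).div (hasDerivAt_id s) hs0
  have hvp : HasDerivAt (fun t => (xs t - ap t) / t)
      (((deriv xs s - deriv ap s) * s - (xs s - ap s) * 1) / s ^ 2) s :=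
    (hxsD.sub hapD).div (hasDerivAt_id s) hs0
  -- moving-endpoint integrals
  have hcont : Continuous (fun a => ψ (u₀ a)) := hψc.comp hu₀
  set P : ℝ → ℝ := fun x => ∫ a in (am tf)..x, ψ (u₀ a) with hPdef
  set Q : ℝ → ℝ := fun x => ∫ a in (ap tf)..x, ψ (u₀ a) with hQdef
  have hP : ∀ x, HasDerivAt P (ψ (u₀ x)) x := fun x =>
    intervalIntegral.integral_hasDerivAt_right (hcont.intervalIntegrable _ _)
      (hcont.stronglyMeasurableAtFilter _ _) hcont.continuousAt
  have hQ : ∀ x, HasDerivAt Q (ψ (u₀ x)) x := fun x =>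
    intervalIntegral.integral_hasDerivAt_right (hcont.intervalIntegrable _ _)
      (hcont.stronglyMeasurableAtFilter _ _) hcont.continuousAt
  -- closed form function E
  set E : ℝ → ℝ := fun t =>
    (t * Ψ ((xs t - am t) / t) - t * Ψ ((xs t - ap t) / t)) + P (am t) - Q (ap t)
    with hEdef
  -- Δ agrees with E near s
  have hΔE : Δ =ᶠ[nhds s] E := by
    filter_upwards [Ioo_mem_nhds hs.1 hs.2] with t ht
    have ht0 : t ≠ 0 := (htstar.trans ht.1).ne'
    rw [hΔ t, hEdef]
    simp only
    rw [psi_int_closed ψ hψc t (xs t) (am t) (ap t) ht0,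
      intervalIntegral.integral_symm (ap tf) (ap t)]
    simp only [hΨdef, hPdef, hQdef]
    ring_nf
  -- derivative of E
  have hEd : HasDerivAt E
      ((1 * Ψ ((xs s - am s) / s)
          + s * (ψ ((xs s - am s) / s) *
            (((deriv xs s - deriv am s) * s - (xs s - am s) * 1) / s ^ 2))
        - (1 * Ψ ((xs s - ap s) / s)
          + s * (ψ ((xs s - ap s) / s) *
            (((deriv xs s - deriv ap s) * s - (xs s - ap s) * 1) / s ^ 2)))
        + ψ (u₀ (am s)) * deriv am s - ψ (u₀ (ap s)) * deriv ap s)) s := by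
    have h1 : HasDerivAt (fun t => t * Ψ ((xs t - am t) / t))
        (1 * Ψ ((xs s - am s) / s)
          + s * (ψ ((xs s - am s) / s) *
            (((deriv xs s - deriv am s) * s - (xs s - am s) * 1) / s ^ 2))) s :=
      (hasDerivAt_id s).mul ((hΨ _).comp s hvm)
    have h2 : HasDerivAt (fun t => t * Ψ ((xs t - ap t) / t))
        (1 * Ψ ((xs s - ap s) / s)
          + s * (ψ ((xs s - ap s) / s) *
            (((deriv xs s - deriv ap s) * s - (xs s - ap s) * 1) / s ^ 2))) s :=
      (hasDerivAt_id s).mul ((hΨ _).comp s hvp)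
    have h3 : HasDerivAt (fun t => P (am t)) (ψ (u₀ (am s)) * deriv am s) s :=
      (hP _).comp s hamD
    have h4 : HasDerivAt (fun t => Q (ap t)) (ψ (u₀ (ap s)) * deriv ap s) s :=
      (hQ _).comp s hapD
    exact ((h1.sub h2).add h3).sub h4
  have hDeriv : HasDerivAt Δ _ s := hEd.congr_of_eventuallyEq hΔE
  -- identify the derivative value with the stated integral
  have hval :
      (1 / s) * (∫ a in (am s)..(ap s),
          deriv ψ ((xs s - a) / s) * (deriv xs s - (xs s - a) / s))
      = (1 * Ψ ((xs s - am s) / s)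
          + s * (ψ ((xs s - am s) / s) *
            (((deriv xs s - deriv am s) * s - (xs s - am s) * 1) / s ^ 2))
        - (1 * Ψ ((xs s - ap s) / s)
          + s * (ψ ((xs s - ap s) / s) *
            (((deriv xs s - deriv ap s) * s - (xs s - ap s) * 1) / s ^ 2)))
        + ψ (u₀ (am s)) * deriv am s - ψ (u₀ (ap s)) * deriv ap s) := by
    have hum : u₀ (am s) = (xs s - am s) / s := by
      have h := hend_m s hsIcc
      field_simp
      linarith
    have hup : u₀ (ap s) = (xs s - ap s) / s := by
      have h := hend_p s hsIcc
      field_simp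
      linarith
    rw [psi'_int_closed ψ hψ s (xs s) (deriv xs s) (am s) (ap s) hs0, hum, hup]
    field_simp
    ring
  rw [hval]
  exact hDeriv
end

section
/- Let c₋ < c₊ be real numbers, let f: [c₋, c₊] → ℝ be continuously differentiable, and let Δ ∈ ℝ satisfy 1 + f'(c)·Δ ≥ 0 for all c ∈ [c₋, c₊] and D := (c₊ − c₋) + (f(c₊) − f(c₋))·Δ > 0. Define p(c) := (1 + f'(c)·Δ)/D. Then p ≥ 0 and ∫_{c₋}^{c₊} p(c) dc = 1, i.e. p is a probability density on [c₋, c₊]; and if moreover ∫_{c₋}^{c₊} f(c) dc = (c₊ − c₋)·(f(c₋) + f(c₊))/2, then ∫_{c₋}^{c₊} f(c)·p(c) dc = (f(c₋) + f(c₊))/2. -/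
/-- The transported distribution in the geometric construction of the backward stochastic
Burgers flow: `p(c) = (1 + f'(c)·Δ)/D` with `D = (c₊ − c₋) + (f(c₊) − f(c₋))·Δ > 0` is a
probability density on `[c₋, c₊]`, and if `f` has mean `(f(c₋)+f(c₊))/2` with respect to
the uniform density, then it also has mean `(f(c₋)+f(c₊))/2` with respect to `p`. -/
theorem transported_density_is_probability (cm cp Δ : ℝ) (f f' : ℝ → ℝ)
    (hlt : cm < cp)
    (hderiv : ∀ c ∈ Set.Icc cm cp, HasDerivAt f (f' c) c)
    (hcont : ContinuousOn f' (Set.Icc cm cp))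
    (hnonneg : ∀ c ∈ Set.Icc cm cp, 0 ≤ 1 + f' c * Δ)
    (hD : 0 < (cp - cm) + (f cp - f cm) * Δ) :
    (∀ c ∈ Set.Icc cm cp,
      0 ≤ (1 + f' c * Δ) / ((cp - cm) + (f cp - f cm) * Δ)) ∧
    (∫ c in cm..cp, (1 + f' c * Δ) / ((cp - cm) + (f cp - f cm) * Δ)) = 1 ∧
    ((∫ c in cm..cp, f c) = (cp - cm) * (f cm + f cp) / 2 →
      (∫ c in cm..cp, f c * ((1 + f' c * Δ) / ((cp - cm) + (f cp - f cm) * Δ)))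
        = (f cm + f cp) / 2) := by
  set D : ℝ := (cp - cm) + (f cp - f cm) * Δ with hDdef
  have hle : cm ≤ cp := hlt.le
  have huIcc : Set.uIcc cm cp = Set.Icc cm cp := Set.uIcc_of_le hle
  have hfc : ContinuousOn f (Set.Icc cm cp) := fun c hc =>
    (hderiv c hc).continuousAt.continuousWithinAt
  -- I1 : ∫ (1 + f' c Δ) = D
  have hI1 : (∫ c in cm..cp, (1 + f' c * Δ)) = D := by
    have := intervalIntegral.integral_eq_sub_of_hasDerivAt
      (f := fun c => c + f c * Δ) (f' := fun c => 1 + f' c * Δ) (a := cm) (b := cp)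
      (fun c hc => by
        have := (hderiv c (huIcc ▸ hc)).mul_const Δ
        exact (hasDerivAt_id' c).add this)
      (by
        apply ContinuousOn.intervalIntegrable
        rw [huIcc]
        exact continuousOn_const.add (hcont.mul continuousOn_const))
    rw [this]; ring
  -- I2 : ∫ f * f' = (f cp ^2 - f cm ^2)/2
  have hI2 : (∫ c in cm..cp, f c * f' c) = (f cp ^ 2 - f cm ^ 2) / 2 := by
    have := intervalIntegral.integral_eq_sub_of_hasDerivAt
      (f := fun c => f c ^ 2 / 2) (f' := fun c => f c * f' c) (a := cm) (b := cp)
      (fun c hc => by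
        have h := ((hderiv c (huIcc ▸ hc)).fun_pow 2).div_const 2
        refine h.congr_deriv ?_
        have : f c ^ (2 - 1) = f c := by ring
        rw [this]; ring)
      (by
        apply ContinuousOn.intervalIntegrable
        rw [huIcc]
        exact hfc.mul hcont)
    rw [this]; ring
  have hDne : D ≠ 0 := ne_of_gt hD
  refine ⟨fun c hc => div_nonneg (hnonneg c hc) hD.le, ?_, ?_⟩
  · rw [intervalIntegral.integral_div, hI1, div_self hDne]
  · intro hmean
    have hIf : IntervalIntegrable f MeasureTheory.volume cm cp := by
      apply ContinuousOn.intervalIntegrable; rwa [huIcc]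
    have hIff' : IntervalIntegrable (fun c => f c * f' c * Δ) MeasureTheory.volume cm cp := by
      apply ContinuousOn.intervalIntegrable
      rw [huIcc]
      exact (hfc.mul hcont).mul continuousOn_const
    have key : (∫ c in cm..cp, f c * (1 + f' c * Δ))
        = (∫ c in cm..cp, f c) + (∫ c in cm..cp, f c * f' c * Δ) := by
      rw [← intervalIntegral.integral_add hIf hIff']
      congr 1; funext c; ring
    have : (∫ c in cm..cp, f c * ((1 + f' c * Δ) / D))
        = ((∫ c in cm..cp, f c * (1 + f' c * Δ))) / D := by
      rw [← intervalIntegral.integral_div]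
      congr 1; funext c; ring
    rw [this, key, intervalIntegral.integral_mul_const, hI2, hmean]
    field_simp
    ring
end

section
/- Fix L > 0 and 0 < s < t. For ν > 0 define f_ν(a) = cosh(L·a/(2νs))·exp(−t·a²/(4νs(t−s))) for a ∈ ℝ, and Z_ν = ∫_ℝ f_ν(a) da. Then f_ν is integrable with Z_ν ∈ (0, ∞), and lim_{ν→0⁺} 4νs·ln( f_ν(0)/Z_ν ) = −L²·(1 − s/t). In particular, the normalized density at the shock location is transcendentally small as ν → 0: the probability for a backward stochastic Lagrangian trajectory of the Khokhlov solution to remain at the shock decays like exp(−L²(1 − s/t)/(4νs)). -/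
open MeasureTheory Filter Real

lemma integrable_exp_quad (b c : ℝ) (hb : 0 < b) :
    Integrable (fun a : ℝ => Real.exp (-b * a ^ 2 + c * a)) := by
  have h : ∀ a : ℝ, -b * a ^ 2 + c * a
      = -b * (a - c / (2 * b)) ^ 2 + c ^ 2 / (4 * b) := by
    intro a; field_simp; ring
  simp_rw [h, Real.exp_add]
  exact (((integrable_exp_neg_mul_sq hb).comp_sub_right (c / (2 * b)))).mul_const _

lemma integral_exp_quad (b c : ℝ) (hb : 0 < b) :
    ∫ a : ℝ, Real.exp (-b * a ^ 2 + c * a)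
      = Real.sqrt (π / b) * Real.exp (c ^ 2 / (4 * b)) := by
  have h : ∀ a : ℝ, -b * a ^ 2 + c * a
      = -b * (a - c / (2 * b)) ^ 2 + c ^ 2 / (4 * b) := by
    intro a; field_simp; ring
  simp_rw [h, Real.exp_add]
  rw [MeasureTheory.integral_mul_const, integral_sub_right_eq_self
    (fun a => Real.exp (-b * a ^ 2)) (c / (2 * b)), integral_gaussian]

lemma cosh_gauss_eq (b c : ℝ) (a : ℝ) :
    Real.cosh (c * a) * Real.exp (-b * a ^ 2)
      = (Real.exp (-b * a ^ 2 + c * a) + Real.exp (-b * a ^ 2 + (-c) * a)) / 2 := by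
  rw [Real.cosh_eq, Real.exp_add, Real.exp_add]
  ring_nf

lemma integrable_cosh_gauss (b c : ℝ) (hb : 0 < b) :
    Integrable (fun a : ℝ => Real.cosh (c * a) * Real.exp (-b * a ^ 2)) := by
  simp_rw [cosh_gauss_eq]
  exact ((integrable_exp_quad b c hb).add (integrable_exp_quad b (-c) hb)).div_const 2

lemma integral_cosh_gauss (b c : ℝ) (hb : 0 < b) :
    ∫ a : ℝ, Real.cosh (c * a) * Real.exp (-b * a ^ 2)
      = Real.sqrt (π / b) * Real.exp (c ^ 2 / (4 * b)) := by
  simp_rw [cosh_gauss_eq]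
  rw [integral_div, integral_add (integrable_exp_quad b c hb) (integrable_exp_quad b (-c) hb),
    integral_exp_quad b c hb, integral_exp_quad b (-c) hb]
  ring_nf

/-- For the Khokhlov solution, the normalized backward transition density at the shock
location is transcendentally small as `ν → 0⁺`: with
`f_ν(a) = cosh(La/(2νs))·exp(−ta²/(4νs(t−s)))` and `Z_ν = ∫ f_ν`, one has
`f_ν` integrable with positive integral, and
`4νs·ln(f_ν(0)/Z_ν) → −L²(1 − s/t)` as `ν → 0⁺`. -/
theorem khokhlov_shock_probability_decay (L s t : ℝ)
    (hL : 0 < L) (hs : 0 < s) (hst : s < t) :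
    (∀ ν > (0 : ℝ),
      Integrable (fun a : ℝ =>
        Real.cosh (L * a / (2 * ν * s)) * Real.exp (-(t * a ^ 2) / (4 * ν * s * (t - s)))) ∧
      0 < ∫ a : ℝ,
        Real.cosh (L * a / (2 * ν * s)) * Real.exp (-(t * a ^ 2) / (4 * ν * s * (t - s)))) ∧
    Tendsto (fun ν : ℝ => 4 * ν * s *
        Real.log ((Real.cosh (L * 0 / (2 * ν * s))
            * Real.exp (-(t * (0 : ℝ) ^ 2) / (4 * ν * s * (t - s)))) /
          ∫ a : ℝ,
            Real.cosh (L * a / (2 * ν * s)) * Real.exp (-(t * a ^ 2) / (4 * ν * s * (t - s)))))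
      (nhdsWithin 0 (Set.Ioi 0)) (nhds (-L ^ 2 * (1 - s / t))) := by
  have ht : 0 < t := hs.trans hst
  have hts : 0 < t - s := sub_pos.2 hst
  -- key per-ν facts
  have key : ∀ ν : ℝ, 0 < ν →
      (fun a : ℝ => Real.cosh (L * a / (2 * ν * s))
          * Real.exp (-(t * a ^ 2) / (4 * ν * s * (t - s))))
        = fun a : ℝ => Real.cosh ((L / (2 * ν * s)) * a)
          * Real.exp (-(t / (4 * ν * s * (t - s))) * a ^ 2) := by
    intro ν hν
    funext a
    congr 1
    · congr 1; field_simp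
    · congr 1; field_simp
  have hbpos : ∀ ν : ℝ, 0 < ν → 0 < t / (4 * ν * s * (t - s)) := fun ν hν =>
    div_pos ht (by positivity)
  have hZ : ∀ ν : ℝ, 0 < ν →
      (∫ a : ℝ, Real.cosh (L * a / (2 * ν * s))
          * Real.exp (-(t * a ^ 2) / (4 * ν * s * (t - s))))
        = Real.sqrt (π / (t / (4 * ν * s * (t - s))))
          * Real.exp ((L / (2 * ν * s)) ^ 2 / (4 * (t / (4 * ν * s * (t - s))))) := by
    intro ν hν
    rw [key ν hν]
    exact integral_cosh_gauss _ _ (hbpos ν hν)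
  refine ⟨fun ν hν => ?_, ?_⟩
  · constructor
    · rw [key ν hν]; exact integrable_cosh_gauss _ _ (hbpos ν hν)
    · rw [hZ ν hν]
      have : 0 < π / (t / (4 * ν * s * (t - s))) := div_pos pi_pos (hbpos ν hν)
      positivity
  · -- the limit
    have hEq : ∀ᶠ ν in nhdsWithin (0:ℝ) (Set.Ioi 0),
        (4 * ν * s *
          Real.log ((Real.cosh (L * 0 / (2 * ν * s))
              * Real.exp (-(t * (0 : ℝ) ^ 2) / (4 * ν * s * (t - s)))) /
            ∫ a : ℝ, Real.cosh (L * a / (2 * ν * s))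
              * Real.exp (-(t * a ^ 2) / (4 * ν * s * (t - s)))))
          = -2 * s * (Real.log ν * ν) - 2 * ν * s * Real.log (4 * π * s * (t - s) / t)
            - L ^ 2 * (1 - s / t) := by
      filter_upwards [self_mem_nhdsWithin] with ν hν
      have hν : 0 < ν := hν
      have h1 : Real.cosh (L * 0 / (2 * ν * s))
          * Real.exp (-(t * (0:ℝ) ^ 2) / (4 * ν * s * (t - s))) = 1 := by
        norm_num
      rw [h1, hZ ν hν]
      have hb := hbpos ν hν
      have hpib : (0:ℝ) < π / (t / (4 * ν * s * (t - s))) := div_pos pi_pos hb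
      rw [Real.log_div one_ne_zero (by positivity), Real.log_one,
        Real.log_mul (by positivity) (Real.exp_ne_zero _), Real.log_exp,
        Real.log_sqrt hpib.le]
      have hpib_eq : π / (t / (4 * ν * s * (t - s)))
          = (4 * π * s * (t - s) / t) * ν := by field_simp
      have hc_eq : (L / (2 * ν * s)) ^ 2 / (4 * (t / (4 * ν * s * (t - s))))
          = L ^ 2 * (t - s) / (4 * ν * s * t) := by field_simp; ring
      rw [hpib_eq, hc_eq, Real.log_mul (by positivity) (ne_of_gt hν)]
      have h2 : 4 * ν * s * (L ^ 2 * (t - s) / (4 * ν * s * t)) = L ^ 2 * (1 - s / t) := by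
        field_simp
      field_simp
      ring_nf
    refine Tendsto.congr' (hEq.mono fun ν h => h.symm) ?_
    have hlim1 : Tendsto (fun ν : ℝ => Real.log ν * ν) (nhdsWithin 0 (Set.Ioi 0)) (nhds 0) := by
      simpa using tendsto_log_mul_rpow_nhdsGT_zero (one_pos)
    have hlim2 : Tendsto (fun ν : ℝ => -2 * s * (Real.log ν * ν)
        - 2 * ν * s * Real.log (4 * π * s * (t - s) / t) - L ^ 2 * (1 - s / t))
        (nhdsWithin 0 (Set.Ioi 0))
        (nhds (-2 * s * 0 - 2 * 0 * s * Real.log (4 * π * s * (t - s) / t)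
          - L ^ 2 * (1 - s / t))) := by
      refine Tendsto.sub (Tendsto.sub (hlim1.const_mul _) ?_) tendsto_const_nhds
      exact Tendsto.mul_const _ ((((continuous_const.mul continuous_id).mul
        continuous_const).tendsto 0).mono_left nhdsWithin_le_nhds)
    convert hlim2 using 2 <;> ring
end

section
/- Let d ≥ 1, ν > 0, t > 0, and let φ₀: ℝ^d → ℝ be continuously differentiable with ∇φ₀ bounded on ℝ^d. For x ∈ ℝ^d define I(x) = ∫_{ℝ^d} exp( −|x−a|²/(4νt) − φ₀(a)/(2ν) ) da. Then I(x) is finite and positive for every x, the function I is differentiable, and −2ν·∇_x ln I(x) = ∫_{ℝ^d} ∇φ₀(a)·p_x(a) da, where p_x(a) := exp( −|x−a|²/(4νt) − φ₀(a)/(2ν) ) / I(x) is a probability density on ℝ^d. That is, the Hopf–Cole formula for the viscous Burgers velocity u(x,t) = −2ν∇_x ln I(x) coincides with the Constantin–Iyer representation u(x,t) = ∫ u₀(a) p_x(a) da with u₀ = ∇φ₀. -/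
open MeasureTheory

abbrev Esp (d : ℕ) := EuclideanSpace ℝ (Fin d)

section Aux

open Real InnerProductSpace

variable {E : Type*} [NormedAddCommGroup E] [InnerProductSpace ℝ E]
  [FiniteDimensional ℝ E] [MeasurableSpace E] [BorelSpace E]

lemma hc_aux_int (b c k : ℝ) (hb : 0 < b) :
    Integrable (fun v : E => Real.exp (-b * ‖v‖ ^ 2 + c * ‖v‖ + k)) := by
  have hbase : Integrable (fun v : E => Real.exp (-(b/2) * ‖v‖ ^ 2)) := by
    have h := (GaussianFourier.integrable_cexp_neg_mul_sq_norm_add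
      (b := ((b/2 : ℝ) : ℂ)) (by simpa using half_pos hb) 0 (0 : E)).norm
    refine h.congr ?_
    filter_upwards with v
    rw [Complex.norm_exp]
    simp [← Complex.ofReal_pow, ← Complex.ofReal_mul, neg_mul]
  refine ((hbase.const_mul (Real.exp (c ^ 2 / (2 * b) + k))).mono'
    ((Real.continuous_exp.comp (by continuity)).aestronglyMeasurable) ?_)
  filter_upwards with v
  rw [Real.norm_eq_abs, abs_of_pos (Real.exp_pos _), ← Real.exp_add]
  apply Real.exp_le_exp.mpr
  have h0 : 0 ≤ (‖v‖ - c / b) ^ 2 * (b/2) := by positivity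
  have h1 : (‖v‖ - c / b) ^ 2 * (b/2) = (b/2) * ‖v‖^2 - c * ‖v‖ + c^2/(2*b) := by
    field_simp; ring
  nlinarith [h1]

end Aux

set_option maxHeartbeats 2000000 in
/-- Equivalence of the Hopf–Cole formula and the Constantin–Iyer representation for
viscous Burgers with potential initial data `u₀ = ∇φ₀`: with
`I(x) = ∫ exp(−|x−a|²/(4νt) − φ₀(a)/(2ν)) da`, the integrand is integrable with
`I(x) ∈ (0,∞)`, `I` is differentiable, `p_x(a) = exp(−|x−a|²/(4νt) − φ₀(a)/(2ν))/I(x)`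
is a probability density, and `−2ν·∇ln I(x) = ∫ ∇φ₀(a)·p_x(a) da`. -/
theorem hopf_cole_eq_constantin_iyer (d : ℕ) (hd : 1 ≤ d) (ν t : ℝ)
    (hν : 0 < ν) (ht : 0 < t)
    (φ₀ : EuclideanSpace ℝ (Fin d) → ℝ)
    (hφ : ContDiff ℝ 1 φ₀)
    (hgrad : ∃ M, ∀ a, ‖gradient φ₀ a‖ ≤ M)
    (I : EuclideanSpace ℝ (Fin d) → ℝ)
    (hI : ∀ x, I x = ∫ a, Real.exp (-‖x - a‖ ^ 2 / (4 * ν * t) - φ₀ a / (2 * ν)))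
    (p : EuclideanSpace ℝ (Fin d) → EuclideanSpace ℝ (Fin d) → ℝ)
    (hp : ∀ x a, p x a = Real.exp (-‖x - a‖ ^ 2 / (4 * ν * t) - φ₀ a / (2 * ν)) / I x) :
    (∀ x, Integrable (fun a : EuclideanSpace ℝ (Fin d) =>
        Real.exp (-‖x - a‖ ^ 2 / (4 * ν * t) - φ₀ a / (2 * ν))) ∧ 0 < I x) ∧
    Differentiable ℝ I ∧
    (∀ x, (∫ a, p x a) = 1 ∧
      (-(2 * ν)) • gradient (fun y => Real.log (I y)) x = ∫ a, p x a • gradient φ₀ a) := by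
  classical
  have hEd : 1 ≤ d := hd
  obtain ⟨M₀, hM₀⟩ := hgrad
  set M : ℝ := max M₀ 0 with hMdef
  have hM : ∀ a, ‖gradient φ₀ a‖ ≤ M := fun a => (hM₀ a).trans (le_max_left _ _)
  have hM0 : 0 ≤ M := le_max_right _ _
  have h2ν : (0:ℝ) < 2 * ν := by positivity
  have h4 : (0:ℝ) < 4 * ν * t := by positivity
  have hdiffφ : Differentiable ℝ φ₀ := hφ.differentiable one_ne_zero
  have hφc : Continuous φ₀ := hφ.continuous
  -- F is the main integrand
  set F : Esp d → Esp d → ℝ := fun x a =>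
    Real.exp (-‖x - a‖ ^ 2 / (4 * ν * t) - φ₀ a / (2 * ν)) with hFdef
  have hFpos : ∀ x a, 0 < F x a := fun _ _ => Real.exp_pos _
  -- gradient vs fderiv
  have hdual : ∀ z, InnerProductSpace.toDual ℝ (Esp d) (gradient φ₀ z) = fderiv ℝ φ₀ z :=
    fun z => (InnerProductSpace.toDual ℝ (Esp d)).apply_symm_apply (fderiv ℝ φ₀ z)
  have hfd : ∀ a, ‖fderiv ℝ φ₀ a‖ ≤ M := fun a => by
    rw [← hdual a, LinearIsometryEquiv.norm_map]; exact hM a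
  have hgradc : Continuous (gradient φ₀ : Esp d → Esp d) := by
    show Continuous fun z => (InnerProductSpace.toDual ℝ (Esp d)).symm (fderiv ℝ φ₀ z)
    exact (InnerProductSpace.toDual ℝ (Esp d)).symm.continuous.comp (hφ.continuous_fderiv one_ne_zero)
  -- linear growth of φ₀
  have hlin : ∀ a : Esp d, -φ₀ a ≤ |φ₀ 0| + M * ‖a‖ := by
    intro a
    have h := Convex.norm_image_sub_le_of_norm_fderiv_le
      (fun x _ => hdiffφ x) (fun x _ => hfd x) convex_univ
      (Set.mem_univ (0 : Esp d)) (Set.mem_univ a)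
    rw [Real.norm_eq_abs, sub_zero] at h
    have := abs_sub_abs_le_abs_sub (φ₀ a) (φ₀ 0)
    have := neg_abs_le (φ₀ a)
    nlinarith [abs_nonneg (φ₀ 0)]
  -- a pointwise exponential bound
  have hbd : ∀ (R : ℝ) (x a : Esp d), ‖x‖ ≤ R →
      F x a ≤ Real.exp (-(4*ν*t)⁻¹ * ‖a‖^2 + (2*R/(4*ν*t) + M/(2*ν)) * ‖a‖
        + |φ₀ 0|/(2*ν)) := by
    intro R x a hxR
    apply Real.exp_le_exp.mpr
    have habs : |‖x‖ - ‖a‖| ≤ ‖x - a‖ := abs_norm_sub_norm_le x a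
    have hsq : (‖x‖ - ‖a‖)^2 ≤ ‖x - a‖^2 := by
      nlinarith [habs, abs_nonneg (‖x‖ - ‖a‖), sq_abs (‖x‖ - ‖a‖), norm_nonneg (x - a)]
    have h1 : ‖a‖^2 - 2*R*‖a‖ ≤ ‖x - a‖^2 := by
      nlinarith [hsq, mul_nonneg (sub_nonneg.mpr hxR) (norm_nonneg a), sq_nonneg ‖x‖]
    have l1 : -‖x - a‖ ^ 2 / (4*ν*t) ≤ (-‖a‖^2 + 2*R*‖a‖) / (4*ν*t) :=
      (div_le_div_iff_of_pos_right h4).mpr (by linarith)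
    have l2 : -(φ₀ a / (2*ν)) ≤ (|φ₀ 0| + M*‖a‖) / (2*ν) := by
      rw [← neg_div]
      exact (div_le_div_iff_of_pos_right h2ν).mpr (hlin a)
    have e2 : -(4*ν*t)⁻¹ * ‖a‖^2 + (2*R/(4*ν*t) + M/(2*ν)) * ‖a‖ + |φ₀ 0|/(2*ν)
        = (-‖a‖^2 + 2*R*‖a‖) / (4*ν*t) + (|φ₀ 0| + M*‖a‖) / (2*ν) := by ring
    rw [e2]
    linarith
  -- integrability of F x
  have hFcont : ∀ x, Continuous (F x) := fun x =>
    Real.continuous_exp.comp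
      ((((continuous_const.sub continuous_id).norm.pow 2).neg.div_const _).sub
        (hφc.div_const _))
  have hFint : ∀ x, Integrable (F x) := by
    intro x
    refine (hc_aux_int (4*ν*t)⁻¹ (2*‖x‖/(4*ν*t) + M/(2*ν)) (|φ₀ 0|/(2*ν))
      (by positivity)).mono' (hFcont x).aestronglyMeasurable ?_
    filter_upwards with a
    rw [Real.norm_eq_abs, abs_of_pos (hFpos x a)]
    exact hbd ‖x‖ x a le_rfl
  haveI : NeZero (volume : Measure (Esp d)) := by
    constructor
    intro h
    have h2 := isOpen_univ.measure_pos (volume : Measure (Esp d)) ⟨0, trivial⟩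
    rw [h] at h2; simp at h2
  have hIpos : ∀ x, 0 < I x := fun x => by
    rw [hI x]; exact integral_exp_pos (hFint x)
  have hpF : ∀ x a, p x a = F x a / I x := hp
  -- translated integrand
  set G : Esp d → Esp d → ℝ := fun x w =>
    Real.exp (-‖w‖ ^ 2 / (4 * ν * t) - φ₀ (x - w) / (2 * ν)) with hGdef
  have hGpos : ∀ x w, 0 < G x w := fun _ _ => Real.exp_pos _
  have hGF : ∀ x w, G x w = F x (x - w) := by
    intro x w; simp only [hGdef, hFdef, sub_sub_cancel]
  have htrans : ∀ x, I x = ∫ w, G x w := by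
    intro x
    rw [hI x, ← integral_sub_left_eq_self (fun a => F x a) volume x]
    exact integral_congr_ae (.of_forall fun w => (hGF x w).symm)
  -- uniform bound near a point
  set B : Esp d → Esp d → ℝ := fun x₀ w =>
    Real.exp (-(4*ν*t)⁻¹ * ‖w‖^2 + (M/(2*ν)) * ‖w‖ + (|φ₀ 0| + M*(‖x₀‖+1))/(2*ν)) with hBdef
  have hGbd : ∀ x₀ x, x ∈ Metric.ball x₀ 1 → ∀ w, G x w ≤ B x₀ w := by
    intro x₀ x hx w
    apply Real.exp_le_exp.mpr
    have hxn : ‖x - x₀‖ < 1 := mem_ball_iff_norm.mp hx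
    have h3 : ‖x‖ - ‖x₀‖ ≤ ‖x - x₀‖ := norm_sub_norm_le x x₀
    have hxw : ‖x - w‖ ≤ ‖x₀‖ + 1 + ‖w‖ := by
      have h1 : ‖x - w‖ ≤ ‖x‖ + ‖w‖ := norm_sub_le x w
      linarith
    have l2 : -(φ₀ (x - w) / (2*ν)) ≤ (|φ₀ 0| + M*‖x - w‖) / (2*ν) := by
      rw [← neg_div]; exact (div_le_div_iff_of_pos_right h2ν).mpr (hlin (x - w))
    have l3 : (|φ₀ 0| + M*‖x - w‖) / (2*ν) ≤ (|φ₀ 0| + M*(‖x₀‖ + 1 + ‖w‖)) / (2*ν) := by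
      refine (div_le_div_iff_of_pos_right h2ν).mpr ?_
      nlinarith [mul_le_mul_of_nonneg_left hxw hM0]
    have e3 : -(4*ν*t)⁻¹ * ‖w‖^2 + (M/(2*ν)) * ‖w‖ + (|φ₀ 0| + M*(‖x₀‖+1))/(2*ν)
        = -‖w‖ ^ 2 / (4 * ν * t) + (|φ₀ 0| + M*(‖x₀‖ + 1 + ‖w‖)) / (2*ν) := by ring
    rw [e3]
    linarith
  have hBint : ∀ x₀, Integrable (B x₀) := fun x₀ => hc_aux_int _ _ _ (by positivity)
  have hGcont : ∀ x, Continuous (G x) := fun x =>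
    Real.continuous_exp.comp
      (((continuous_norm.pow 2).neg.div_const _).sub
        ((hφc.comp (continuous_const.sub continuous_id)).div_const _))
  have hGint : ∀ x₀ x, x ∈ Metric.ball x₀ 1 → Integrable (G x) := by
    intro x₀ x hx
    refine (hBint x₀).mono' (hGcont x).aestronglyMeasurable ?_
    filter_upwards with w
    rw [Real.norm_eq_abs, abs_of_pos (hGpos x w)]
    exact hGbd x₀ x hx w
  -- the derivative candidate
  set F' : Esp d → Esp d → (Esp d →L[ℝ] ℝ) := fun x w =>
    (-(G x w)/(2*ν)) • (InnerProductSpace.toDual ℝ (Esp d) (gradient φ₀ (x - w))) with hF'def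
  have hder : ∀ (w x : Esp d), HasFDerivAt (fun y => G y w) (F' x w) x := by
    intro w x
    have h1 : HasFDerivAt (fun y : Esp d => φ₀ (y - w)) (fderiv ℝ φ₀ (x - w)) x := by
      have h := (hdiffφ (x - w)).hasFDerivAt.comp x ((hasFDerivAt_id x).sub_const w)
      simpa [Function.comp_def] using h
    have h2 : HasFDerivAt (fun y : Esp d => -‖w‖ ^ 2 / (4 * ν * t) - φ₀ (y - w) / (2 * ν))
        ((-(2*ν)⁻¹ : ℝ) • fderiv ℝ φ₀ (x - w)) x := by
      have h := (h1.const_smul ((2*ν)⁻¹)).const_sub (-‖w‖ ^ 2 / (4 * ν * t))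
      have efun : (fun y : Esp d => -‖w‖ ^ 2 / (4 * ν * t) - (2*ν)⁻¹ • φ₀ (y - w))
          = fun y : Esp d => -‖w‖ ^ 2 / (4 * ν * t) - φ₀ (y - w) / (2 * ν) := by
        funext y; rw [smul_eq_mul]; ring
      simp only [Pi.smul_apply] at h
      rw [efun] at h
      rw [neg_smul]
      exact h
    have h3 := h2.exp
    have e2 : F' x w = Real.exp (-‖w‖ ^ 2 / (4 * ν * t) - φ₀ (x - w) / (2 * ν)) •
        ((-(2*ν)⁻¹ : ℝ) • fderiv ℝ φ₀ (x - w)) := by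
      simp only [hF'def, hGdef, hdual]
      ext y
      simp only [ContinuousLinearMap.coe_smul', Pi.smul_apply, smul_eq_mul]
      ring
    rw [e2]
    simp only [hGdef]
    exact h3
  have hF'norm : ∀ x w, ‖F' x w‖ ≤ (M/(2*ν)) * (G x w) := by
    intro x w
    have habs : ‖(-(G x w)/(2*ν))‖ = G x w/(2*ν) := by
      rw [Real.norm_eq_abs, abs_div, abs_neg, abs_of_pos (hGpos x w), abs_of_pos h2ν]
    calc ‖F' x w‖
        = ‖(-(G x w)/(2*ν)) • (InnerProductSpace.toDual ℝ (Esp d)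
            (gradient φ₀ (x - w)))‖ := rfl
      _ = G x w/(2*ν) * ‖gradient φ₀ (x - w)‖ := by
          rw [norm_smul, LinearIsometryEquiv.norm_map, habs]
      _ ≤ G x w/(2*ν) * M :=
          mul_le_mul_of_nonneg_left (hM _) (le_of_lt (div_pos (hGpos x w) h2ν))
      _ = (M/(2*ν)) * G x w := by ring
  have hF'cont : ∀ x₀, Continuous (F' x₀) := fun x₀ =>
    (((hGcont x₀).neg.div_const _).smul
      ((InnerProductSpace.toDual ℝ (Esp d)).continuous.comp
        (hgradc.comp (continuous_const.sub continuous_id))))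
  have hF'bd : ∀ x₀ x, x ∈ Metric.ball x₀ 1 → ∀ w, ‖F' x w‖ ≤ (M/(2*ν)) * B x₀ w := by
    intro x₀ x hx w
    refine (hF'norm x w).trans ?_
    exact mul_le_mul_of_nonneg_left (hGbd x₀ x hx w) (by positivity)
  have hkeyD : ∀ x₀ : Esp d, HasFDerivAt (fun x => ∫ w, G x w) (∫ w, F' x₀ w) x₀ := by
    intro x₀
    apply hasFDerivAt_integral_of_dominated_of_fderiv_le (hs := Metric.ball_mem_nhds x₀ one_pos)
      (bound := fun w => (M/(2*ν)) * B x₀ w)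
    · exact Filter.Eventually.of_forall fun x => (hGcont x).aestronglyMeasurable
    · exact hGint x₀ x₀ (Metric.mem_ball_self one_pos)
    · exact (hF'cont x₀).aestronglyMeasurable
    · exact Filter.Eventually.of_forall fun w x hx => hF'bd x₀ x hx w
    · exact (hBint x₀).const_mul _
    · exact Filter.Eventually.of_forall fun w x hx => hder w x
  have hF'int : ∀ x₀, Integrable (F' x₀) := by
    intro x₀
    refine ((hBint x₀).const_mul (M/(2*ν))).mono' (hF'cont x₀).aestronglyMeasurable ?_
    filter_upwards with w
    exact hF'bd x₀ x₀ (Metric.mem_ball_self one_pos) w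
  have hGvecint : ∀ x₀, Integrable (fun w => (-(G x₀ w)/(2*ν)) • gradient φ₀ (x₀ - w)) := by
    intro x₀
    refine ((hBint x₀).const_mul (M/(2*ν))).mono'
      (((hGcont x₀).neg.div_const _).smul
        (hgradc.comp (continuous_const.sub continuous_id))).aestronglyMeasurable ?_
    filter_upwards with w
    have habs : ‖(-(G x₀ w)/(2*ν))‖ = G x₀ w/(2*ν) := by
      rw [Real.norm_eq_abs, abs_div, abs_neg, abs_of_pos (hGpos x₀ w), abs_of_pos h2ν]
    rw [norm_smul, habs]
    calc G x₀ w/(2*ν) * ‖gradient φ₀ (x₀ - w)‖ ≤ G x₀ w/(2*ν) * M :=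
          mul_le_mul_of_nonneg_left (hM _) (le_of_lt (div_pos (hGpos x₀ w) h2ν))
      _ = (M/(2*ν)) * G x₀ w := by ring
      _ ≤ (M/(2*ν)) * B x₀ w :=
          mul_le_mul_of_nonneg_left (hGbd x₀ x₀ (Metric.mem_ball_self one_pos) w)
            (by positivity)
  have hgradI : ∀ x₀ : Esp d,
      HasGradientAt I (∫ a, (-(F x₀ a)/(2*ν)) • gradient φ₀ a) x₀ := by
    intro x₀
    have hswap : (∫ w, F' x₀ w) = InnerProductSpace.toDual ℝ (Esp d)
        (∫ w, (-(G x₀ w)/(2*ν)) • gradient φ₀ (x₀ - w)) := by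
      apply ContinuousLinearMap.ext; intro y
      rw [ContinuousLinearMap.integral_apply (hF'int x₀), InnerProductSpace.toDual_apply_apply,
        real_inner_comm, ← integral_inner (hGvecint x₀) y]
      refine integral_congr_ae (.of_forall fun w => ?_)
      simp only [hF'def, ContinuousLinearMap.coe_smul', Pi.smul_apply,
        InnerProductSpace.toDual_apply_apply, real_inner_smul_left, smul_eq_mul,
        real_inner_smul_right]
      rw [real_inner_comm]
    have hG1 : HasGradientAt (fun x => ∫ w, G x w)
        (∫ w, (-(G x₀ w)/(2*ν)) • gradient φ₀ (x₀ - w)) x₀ :=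
      hasGradientAt_iff_hasFDerivAt.mpr (hswap ▸ hkeyD x₀)
    have hIe : I = fun x => ∫ w, G x w := funext htrans
    have hsub : (∫ w, (-(G x₀ w)/(2*ν)) • gradient φ₀ (x₀ - w))
        = ∫ a, (-(F x₀ a)/(2*ν)) • gradient φ₀ a := by
      rw [← integral_sub_left_eq_self
        (fun a => (-(F x₀ a)/(2*ν)) • gradient φ₀ a) volume x₀]
      exact integral_congr_ae (.of_forall fun w => by simp only [sub_sub_cancel, hGF])
    rw [hIe, ← hsub]
    exact hG1
  refine ⟨fun x => ⟨hFint x, hIpos x⟩,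
    fun x => ((hgradI x).hasFDerivAt).differentiableAt, fun x => ?_⟩
  constructor
  · simp only [hp]
    rw [MeasureTheory.integral_div, ← hI x, div_self (hIpos x).ne']
  · have hlog : HasGradientAt (fun y => Real.log (I y))
        ((I x)⁻¹ • ∫ a, (-(F x a)/(2*ν)) • gradient φ₀ a) x := by
      have h1 := (Real.hasDerivAt_log (hIpos x).ne').comp_hasFDerivAt x
        (hgradI x).hasFDerivAt
      refine hasGradientAt_iff_hasFDerivAt.mpr ?_
      have e : InnerProductSpace.toDual ℝ (Esp d)
          ((I x)⁻¹ • ∫ a, (-(F x a)/(2*ν)) • gradient φ₀ a)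
          = (I x)⁻¹ • InnerProductSpace.toDual ℝ (Esp d)
            (∫ a, (-(F x a)/(2*ν)) • gradient φ₀ a) := by
        simp
      rw [e]
      exact h1
    have e4 : ∀ a : Esp d, p x a • gradient φ₀ a
        = (-(2*ν)) • ((I x)⁻¹ • ((-(F x a)/(2*ν)) • gradient φ₀ a)) := by
      intro a
      rw [hpF, smul_smul, smul_smul]
      congr 1
      have h2 : (2*ν) ≠ 0 := h2ν.ne'
      have h3 : I x ≠ 0 := (hIpos x).ne'
      field_simp
    rw [hlog.gradient, integral_congr_ae (Filter.Eventually.of_forall e4),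
      integral_smul, integral_smul]
end

section
/- Fix L > 0 and 0 < s < t. For each ν > 0 let μ_ν be the Borel probability measure on ℝ whose density with respect to Lebesgue measure is proportional to cosh( L·a/(2νs) )·exp( −t·a²/(4νs(t−s)) ). Then, as ν → 0⁺, the measures μ_ν converge weakly to the two-atom measure ½·δ_{a₊} + ½·δ_{a₋}, where a_± = ±L·(1 − s/t). In particular, the backward stochastic Lagrangian trajectories of the Khokhlov solution started exactly at the shock remain random in the zero-viscosity limit, jumping left or right of the shock with equal probabilities (spontaneous stochasticity). -/
open MeasureTheory Filter

/-- Gaussian change of variables: center and rescale. -/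
lemma khok_cov (g : ℝ → ℝ) (c b : ℝ) (hb : 0 < b) :
    ∫ a : ℝ, g a * Real.exp (-b * (a - c) ^ 2)
      = (Real.sqrt b)⁻¹ * ∫ y : ℝ, g (c + (Real.sqrt b)⁻¹ * y) * Real.exp (-y ^ 2) := by
  set σ : ℝ := (Real.sqrt b)⁻¹ with hσdef
  have hsb : 0 < Real.sqrt b := Real.sqrt_pos.mpr hb
  have hσ : 0 < σ := inv_pos.mpr hsb
  have hbσ : b * σ ^ 2 = 1 := by
    rw [hσdef, inv_pow, Real.sq_sqrt hb.le]
    field_simp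
  have h1 : (∫ a : ℝ, g a * Real.exp (-b * (a - c) ^ 2))
      = ∫ x : ℝ, g (x + c) * Real.exp (-b * x ^ 2) := by
    rw [← integral_add_right_eq_self (μ := volume)
      (fun a => g a * Real.exp (-b * (a - c) ^ 2)) c]
    simp
  rw [h1]
  have h2 := Measure.integral_comp_mul_left (fun x => g (x + c) * Real.exp (-b * x ^ 2)) σ
  rw [show |σ⁻¹| = σ⁻¹ from abs_of_pos (inv_pos.mpr hσ), smul_eq_mul] at h2
  have h3 : ∀ y : ℝ, g (σ * y + c) * Real.exp (-b * (σ * y) ^ 2)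
      = g (c + σ * y) * Real.exp (-y ^ 2) := by
    intro y
    rw [add_comm]
    congr 2
    linear_combination (-y ^ 2) * hbσ
  simp only [h3] at h2
  rw [h2, ← mul_assoc, mul_inv_cancel₀ hσ.ne', one_mul]

/-- Dominated convergence for shrinking Gaussians. -/
lemma khok_gauss_tendsto (f : ℝ → ℝ) (hf : Continuous f) (M : ℝ) (hM : ∀ x, |f x| ≤ M)
    (c : ℝ) {l : Filter ℝ} [l.IsCountablyGenerated] (σ : ℝ → ℝ)
    (hσ : Tendsto σ l (nhds 0)) :
    Tendsto (fun ν => ∫ y : ℝ, f (c + σ ν * y) * Real.exp (-y ^ 2)) l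
      (nhds (f c * Real.sqrt Real.pi)) := by
  have hint : Integrable (fun y : ℝ => Real.exp (-y ^ 2)) := by
    simpa using integrable_exp_neg_mul_sq (one_pos)
  have hlim : Tendsto (fun ν => ∫ y : ℝ, f (c + σ ν * y) * Real.exp (-y ^ 2)) l
      (nhds (∫ y : ℝ, f c * Real.exp (-y ^ 2))) := by
    apply tendsto_integral_filter_of_dominated_convergence
      (fun y : ℝ => M * Real.exp (-y ^ 2))
    · filter_upwards with ν
      exact ((hf.comp (by continuity)).mul (by continuity)).aestronglyMeasurable
    · filter_upwards with ν
      filter_upwards with y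
      rw [Real.norm_eq_abs, abs_mul, abs_of_pos (Real.exp_pos _)]
      exact mul_le_mul_of_nonneg_right (hM _) (Real.exp_pos _).le
    · exact hint.const_mul M
    · filter_upwards with y
      have h : Tendsto (fun ν => c + σ ν * y) l (nhds c) := by
        have : Tendsto (fun ν => c + σ ν * y) l (nhds (c + 0 * y)) :=
          tendsto_const_nhds.add (hσ.mul_const y)
        simpa using this
      exact ((hf.tendsto c).comp h).mul_const _
  have heq : (∫ y : ℝ, f c * Real.exp (-y ^ 2)) = f c * Real.sqrt Real.pi := by
    rw [integral_const_mul]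
    congr 1
    simpa using integral_gaussian 1
  rwa [heq] at hlim

/-- Pointwise algebraic identity: completing the square in the density. -/
lemma khok_ident (L s t ν a : ℝ) (hν : ν ≠ 0) (hs : s ≠ 0) (hts : t - s ≠ 0) (ht : t ≠ 0) :
    Real.cosh (L * a / (2 * ν * s)) * Real.exp (-(t * a ^ 2) / (4 * ν * s * (t - s)))
      = Real.exp (t / (4 * ν * s * (t - s)) * (L * (1 - s / t)) ^ 2) / 2 *
        (Real.exp (-(t / (4 * ν * s * (t - s))) * (a - L * (1 - s / t)) ^ 2)
          + Real.exp (-(t / (4 * ν * s * (t - s))) * (a + L * (1 - s / t)) ^ 2)) := by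
  rw [Real.cosh_eq, div_mul_eq_mul_div, add_mul, ← Real.exp_add, ← Real.exp_add,
    div_mul_eq_mul_div, mul_add, ← Real.exp_add, ← Real.exp_add]
  congr 3 <;> · field_simp; ring

/-- Spontaneous stochasticity for the Khokhlov solution: the backward transition
probability measures `μ_ν` with densities proportional to
`cosh(La/(2νs))·exp(−ta²/(4νs(t−s)))` converge weakly, as `ν → 0⁺`, to the two-atom
measure `½δ_{a₊} + ½δ_{a₋}` with `a_± = ±L(1 − s/t)`: for every bounded continuous test
function `f` the normalized integrals converge to `½f(a₊) + ½f(a₋)`. -/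
theorem khokhlov_spontaneous_stochasticity (L s t : ℝ)
    (hL : 0 < L) (hs : 0 < s) (hst : s < t) :
    ∀ f : ℝ → ℝ, Continuous f → (∃ M, ∀ x, |f x| ≤ M) →
      Tendsto (fun ν : ℝ =>
          (∫ a : ℝ, f a * (Real.cosh (L * a / (2 * ν * s))
              * Real.exp (-(t * a ^ 2) / (4 * ν * s * (t - s)))))
          / ∫ a : ℝ, Real.cosh (L * a / (2 * ν * s))
              * Real.exp (-(t * a ^ 2) / (4 * ν * s * (t - s))))
        (nhdsWithin 0 (Set.Ioi 0))
        (nhds ((1 / 2) * f (L * (1 - s / t)) + (1 / 2) * f (-(L * (1 - s / t))))) := by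
  intro f hf hbdd
  obtain ⟨M, hM⟩ := hbdd
  have ht : 0 < t := hs.trans hst
  have hts : 0 < t - s := sub_pos.mpr hst
  set c : ℝ := L * (1 - s / t) with hcdef
  set σ : ℝ → ℝ := fun ν => Real.sqrt (4 * ν * s * (t - s) / t) with hσdef
  have hπ : 0 < Real.sqrt Real.pi := Real.sqrt_pos.mpr Real.pi_pos
  -- the limit of σ as ν → 0⁺
  have hσ0 : Tendsto σ (nhdsWithin 0 (Set.Ioi 0)) (nhds 0) := by
    have h1 : Tendsto (fun ν : ℝ => 4 * ν * s * (t - s) / t) (nhdsWithin 0 (Set.Ioi 0))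
        (nhds 0) := by
      have : Tendsto (fun ν : ℝ => 4 * ν * s * (t - s) / t) (nhds 0)
          (nhds (4 * 0 * s * (t - s) / t)) :=
        (Continuous.tendsto (by continuity) 0)
      simpa using this.mono_left nhdsWithin_le_nhds
    simpa using h1.sqrt
  -- Jc and Jmc
  set J : ℝ → ℝ → ℝ := fun d ν => ∫ y : ℝ, f (d + σ ν * y) * Real.exp (-y ^ 2) with hJdef
  -- eventual equality of the ratio with (J c + J (-c)) / (2√π)
  have key : ∀ ν ∈ Set.Ioi (0:ℝ),
      (∫ a : ℝ, f a * (Real.cosh (L * a / (2 * ν * s))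
          * Real.exp (-(t * a ^ 2) / (4 * ν * s * (t - s)))))
        / (∫ a : ℝ, Real.cosh (L * a / (2 * ν * s))
            * Real.exp (-(t * a ^ 2) / (4 * ν * s * (t - s))))
      = (J c ν + J (-c) ν) / (2 * Real.sqrt Real.pi) := by
    intro ν hν
    rw [Set.mem_Ioi] at hν
    set b : ℝ := t / (4 * ν * s * (t - s)) with hbdef
    have hbpos : 0 < b :=
      div_pos ht (mul_pos (mul_pos (mul_pos (by norm_num) hν) hs) hts)
    have hsqb : (Real.sqrt b)⁻¹ = σ ν := by
      rw [hσdef]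
      simp only
      rw [← Real.sqrt_inv, hbdef, inv_div]
    set E : ℝ := Real.exp (b * c ^ 2) / 2 with hEdef
    have hEpos : 0 < E := by positivity
    have hσpos : 0 < σ ν := by
      rw [← hsqb]
      exact inv_pos.mpr (Real.sqrt_pos.mpr hbpos)
    -- integrability
    have hIbase : Integrable (fun x : ℝ => Real.exp (-b * x ^ 2)) :=
      integrable_exp_neg_mul_sq hbpos
    have hInt : ∀ d : ℝ, Integrable (fun a : ℝ => E * (f a * Real.exp (-b * (a - d) ^ 2))) := by
      intro d
      refine (((hIbase.comp_sub_right d).bdd_mul hf.aestronglyMeasurable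
        (Eventually.of_forall fun x => by simpa using hM x)).const_mul E)
    -- rewrite the numerator integrand
    have hnum : (∫ a : ℝ, f a * (Real.cosh (L * a / (2 * ν * s))
        * Real.exp (-(t * a ^ 2) / (4 * ν * s * (t - s)))))
        = ∫ a : ℝ, (E * (f a * Real.exp (-b * (a - c) ^ 2))
            + E * (f a * Real.exp (-b * (a - (-c)) ^ 2))) := by
      congr 1
      funext a
      rw [khok_ident L s t ν a hν.ne' hs.ne' hts.ne' ht.ne']
      rw [hEdef, hbdef, hcdef]
      ring_nf
    have hden : (∫ a : ℝ, Real.cosh (L * a / (2 * ν * s))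
        * Real.exp (-(t * a ^ 2) / (4 * ν * s * (t - s))))
        = ∫ a : ℝ, (E * Real.exp (-b * (a - c) ^ 2)
            + E * Real.exp (-b * (a - (-c)) ^ 2)) := by
      congr 1
      funext a
      rw [khok_ident L s t ν a hν.ne' hs.ne' hts.ne' ht.ne']
      rw [hEdef, hbdef, hcdef]
      ring_nf
    have hcov : ∀ (g : ℝ → ℝ) (d : ℝ),
        (∫ a : ℝ, g a * Real.exp (-b * (a - d) ^ 2))
          = σ ν * ∫ y : ℝ, g (d + σ ν * y) * Real.exp (-y ^ 2) := by
      intro g d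
      rw [khok_cov g d b hbpos, hsqb]
    have hone : (∫ y : ℝ, Real.exp (-y ^ 2)) = Real.sqrt Real.pi := by
      simpa using integral_gaussian 1
    have hcov1 : ∀ d : ℝ, (∫ a : ℝ, Real.exp (-b * (a - d) ^ 2))
        = σ ν * Real.sqrt Real.pi := by
      intro d
      have h := hcov (fun _ => (1:ℝ)) d
      simp only [one_mul] at h
      rw [h, hone]
    -- compute both integrals
    have hnum' : (∫ a : ℝ, f a * (Real.cosh (L * a / (2 * ν * s))
        * Real.exp (-(t * a ^ 2) / (4 * ν * s * (t - s)))))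
        = E * σ ν * (J c ν + J (-c) ν) := by
      rw [hnum, integral_add (hInt c) (hInt (-c)), integral_const_mul, integral_const_mul,
        hcov f c, hcov f (-c), hJdef]
      ring
    have hIone : ∀ d : ℝ, Integrable
        (fun a : ℝ => E * Real.exp (-b * (a - d) ^ 2)) := fun d =>
      (hIbase.comp_sub_right d).const_mul E
    have hden' : (∫ a : ℝ, Real.cosh (L * a / (2 * ν * s))
        * Real.exp (-(t * a ^ 2) / (4 * ν * s * (t - s))))
        = E * σ ν * (2 * Real.sqrt Real.pi) := by
      rw [hden, integral_add (hIone c) (hIone (-c)), integral_const_mul, integral_const_mul,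
        hcov1 c, hcov1 (-c)]
      ring
    rw [hnum', hden', mul_div_mul_left _ _ (by positivity)]
  -- conclusion
  have hJc := khok_gauss_tendsto f hf M hM c σ hσ0
  have hJmc := khok_gauss_tendsto f hf M hM (-c) σ hσ0
  have hfinal : Tendsto (fun ν => (J c ν + J (-c) ν) / (2 * Real.sqrt Real.pi))
      (nhdsWithin 0 (Set.Ioi 0))
      (nhds ((f c * Real.sqrt Real.pi + f (-c) * Real.sqrt Real.pi)
        / (2 * Real.sqrt Real.pi))) := (hJc.add hJmc).div_const _
  have hval : (f c * Real.sqrt Real.pi + f (-c) * Real.sqrt Real.pi)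
      / (2 * Real.sqrt Real.pi) = (1 / 2) * f c + (1 / 2) * f (-c) := by
    field_simp
  rw [hval] at hfinal
  refine hfinal.congr' ?_
  filter_upwards [self_mem_nhdsWithin] with ν hν
  exact (key ν hν).symm
end

section
/- Let d ≥ 1. For each ν ∈ (0,1] let S_ν: ℝ^d → ℝ be continuous, and let S_*: ℝ^d → ℝ be continuous with S_* ≥ 0 such that S_*(a) = 0 for exactly one point a₀ ∈ ℝ^d. Assume S_ν → S_* uniformly on compact subsets of ℝ^d as ν → 0⁺ and that there exist c, C > 0 with S_ν(a) ≥ c·|a|² − C for all ν ∈ (0,1] and all a ∈ ℝ^d. Then the probability measures μ_ν with density exp(−S_ν(a)/(2ν)) / ∫ exp(−S_ν/(2ν)) converge weakly to the Dirac measure δ_{a₀} as ν → 0⁺. In particular, at a regular point of the limiting inviscid Burgers solution, the backward stochastic Lagrangian trajectory becomes deterministic in the zero-viscosity limit, converging to the unique inverse Lagrangian image. -/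
open MeasureTheory Filter

lemma gauss_int (d : ℕ) {b : ℝ} (hb : 0 < b) :
    Integrable (fun v : EuclideanSpace ℝ (Fin d) => Real.exp (-b * ‖v‖^2)) := by
  have h := (GaussianFourier.integrable_cexp_neg_mul_sq_norm_add (V := EuclideanSpace ℝ (Fin d))
      (b := (b:ℂ)) (by simpa using hb) 0 0).norm
  refine h.congr (Eventually.of_forall fun v => ?_)
  show ‖Complex.exp _‖ = _
  rw [Complex.norm_exp]
  congr 1
  simp [← Complex.ofReal_pow]

lemma exp_S_integrable (d : ℕ) {g : EuclideanSpace ℝ (Fin d) → ℝ} (hg : Continuous g)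
    {c C ν : ℝ} (hc : 0 < c) (hν : 0 < ν)
    (hgrow : ∀ a, c * ‖a‖ ^ 2 - C ≤ g a) :
    Integrable (fun a : EuclideanSpace ℝ (Fin d) => Real.exp (-g a / (2 * ν))) := by
  have key := (gauss_int d (b := c / (2 * ν)) (by positivity)).const_mul (Real.exp (C / (2 * ν)))
  refine key.mono' ?_ (Eventually.of_forall fun a => ?_)
  · exact (Real.continuous_exp.comp ((hg.neg).div_const _)).aestronglyMeasurable
  · rw [Real.norm_eq_abs, abs_of_pos (Real.exp_pos _), ← Real.exp_add]
    apply Real.exp_le_exp.2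
    have h1 : -g a ≤ C - c * ‖a‖ ^ 2 := by linarith [hgrow a]
    have h2 : -g a / (2 * ν) ≤ (C - c * ‖a‖ ^ 2) / (2 * ν) :=
      (div_le_div_iff_of_pos_right (by positivity)).2 h1
    have h3 : (C - c * ‖a‖ ^ 2) / (2 * ν) = C / (2 * ν) + -(c / (2 * ν)) * ‖a‖ ^ 2 := by
      field_simp; ring
    linarith [h2, h3.le]

set_option maxHeartbeats 1000000 in
/-- Zero-viscosity determinism at a regular point: if `S_ν → S_*` uniformly on compacts,
`S_* ≥ 0` continuous with unique zero `a₀`, and `S_ν(a) ≥ c·|a|² − C` uniformly, then the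
probability measures with densities proportional to `exp(−S_ν/(2ν))` converge weakly to
the Dirac measure `δ_{a₀}` as `ν → 0⁺`: for every bounded continuous `f`, the normalized
integrals converge to `f(a₀)`. -/
theorem laplace_convergence_to_dirac (d : ℕ) (hd : 1 ≤ d)
    (S : ℝ → EuclideanSpace ℝ (Fin d) → ℝ)
    (Sstar : EuclideanSpace ℝ (Fin d) → ℝ)
    (a₀ : EuclideanSpace ℝ (Fin d))
    (hScont : ∀ ν ∈ Set.Ioc (0 : ℝ) 1, Continuous (S ν))
    (hSstarCont : Continuous Sstar)
    (hSstarNonneg : ∀ a, 0 ≤ Sstar a)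
    (hzero : ∀ a, Sstar a = 0 ↔ a = a₀)
    (hunif : ∀ K : Set (EuclideanSpace ℝ (Fin d)), IsCompact K →
      TendstoUniformlyOn S Sstar (nhdsWithin 0 (Set.Ioi 0)) K)
    (c C : ℝ) (hc : 0 < c) (hC : 0 < C)
    (hgrowth : ∀ ν ∈ Set.Ioc (0 : ℝ) 1, ∀ a, c * ‖a‖ ^ 2 - C ≤ S ν a) :
    ∀ f : EuclideanSpace ℝ (Fin d) → ℝ, Continuous f → (∃ M, ∀ a, |f a| ≤ M) →
      Tendsto (fun ν : ℝ =>
          (∫ a, f a * Real.exp (-S ν a / (2 * ν))) / ∫ a, Real.exp (-S ν a / (2 * ν)))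
        (nhdsWithin 0 (Set.Ioi 0)) (nhds (f a₀)) := by
  intro f hfc hfb
  obtain ⟨M, hM⟩ := hfb
  set M₀ : ℝ := max M 1 with hM₀def
  have hM₀pos : 0 < M₀ := lt_of_lt_of_le one_pos (le_max_right _ _)
  have hM' : ∀ a, |f a| ≤ M₀ := fun a => (hM a).trans (le_max_left _ _)
  rw [Metric.tendsto_nhds]
  intro ε hε
  -- δ from continuity of f at a₀
  obtain ⟨δ, hδpos, hδ⟩ := Metric.continuousAt_iff.1 (hfc.continuousAt (x := a₀)) (ε/4) (by positivity)
  -- radius R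
  obtain ⟨R, hRa, hRb⟩ : ∃ R : ℝ, ‖a₀‖ + δ < R ∧ Real.sqrt (2*(C+1)/c) ≤ R :=
    ⟨max (‖a₀‖ + δ) (Real.sqrt (2*(C+1)/c)) + 1,
      (le_max_left _ _).trans_lt (lt_add_one _),
      (le_max_right _ _).trans (lt_add_one _).le⟩
  have hRpos : 0 < R := lt_of_le_of_lt (by positivity) hRa
  have hRball : Metric.ball a₀ δ ⊆ Metric.closedBall 0 R := by
    intro a ha
    rw [Metric.mem_closedBall]
    have h1 : dist a 0 ≤ dist a a₀ + dist a₀ 0 := dist_triangle _ _ _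
    rw [Metric.mem_ball] at ha
    simp only [dist_zero_right] at h1 ⊢
    linarith
  have hRgrow : ∀ a : EuclideanSpace ℝ (Fin d), R ≤ ‖a‖ → ∀ ν ∈ Set.Ioc (0:ℝ) 1,
      (c/2) * ‖a‖^2 + 1 ≤ S ν a := by
    intro a ha ν hν
    have h1 := hgrowth ν hν a
    have hs : Real.sqrt (2*(C+1)/c) ≤ ‖a‖ := hRb.trans ha
    have hsq := Real.sq_sqrt (show (0:ℝ) ≤ 2*(C+1)/c by positivity)
    have h2 : 2*(C+1)/c ≤ ‖a‖^2 := by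
      nlinarith [Real.sqrt_nonneg (2*(C+1)/c), norm_nonneg a]
    have h3 : C + 1 ≤ c * ‖a‖^2 / 2 := by
      have hcc : c * (2*(C+1)/c) = 2*(C+1) := by field_simp
      nlinarith [mul_le_mul_of_nonneg_left h2 hc.le]
    linarith
  -- m
  set A : Set (EuclideanSpace ℝ (Fin d)) :=
    Metric.closedBall 0 R \ Metric.ball a₀ δ with hAdef
  have hAcomp : IsCompact A := (isCompact_closedBall _ _).diff Metric.isOpen_ball
  have hAsub : A ⊆ Metric.closedBall 0 R := Set.diff_subset
  have hAmeas : MeasurableSet A := measurableSet_closedBall.diff measurableSet_ball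
  obtain ⟨m, hmpos, hm1, hmA⟩ :
      ∃ m : ℝ, 0 < m ∧ m ≤ 1 ∧ ∀ a ∈ A, m ≤ Sstar a := by
    rcases A.eq_empty_or_nonempty with hA | hA
    · exact ⟨1, one_pos, le_refl 1, fun a ha => by rw [hA] at ha; exact absurd ha (Set.notMem_empty a)⟩
    · obtain ⟨a₁, ha₁A, ha₁⟩ := hAcomp.exists_isMinOn hA hSstarCont.continuousOn
      have ha₁ne : a₁ ≠ a₀ := by
        intro h
        have : a₁ ∈ Metric.ball a₀ δ := by rw [h]; exact Metric.mem_ball_self hδpos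
        exact ha₁A.2 this
      have ha₁pos : 0 < Sstar a₁ :=
        lt_of_le_of_ne (hSstarNonneg a₁) (fun h => ha₁ne ((hzero a₁).1 h.symm))
      exact ⟨min 1 (Sstar a₁), lt_min one_pos ha₁pos, min_le_left _ _,
        fun a ha => le_trans (min_le_right _ _) (ha₁ ha)⟩
  -- r
  obtain ⟨r, hrpos, hrδ, hrS⟩ :
      ∃ r : ℝ, 0 < r ∧ r ≤ δ ∧ ∀ a ∈ Metric.ball a₀ r, Sstar a ≤ m/8 := by
    obtain ⟨r', hr'pos, hr'⟩ := Metric.continuousAt_iff.1 (hSstarCont.continuousAt (x := a₀)) (m/8) (by positivity)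
    refine ⟨min r' δ, lt_min hr'pos hδpos, min_le_right _ _, fun a ha => ?_⟩
    rw [Metric.mem_ball] at ha
    have h1 := hr' (lt_of_lt_of_le ha (min_le_left _ _))
    rw [Real.dist_eq, (hzero a₀).2 rfl, sub_zero] at h1
    exact (le_abs_self _).trans h1.le
  have hrball : Metric.ball a₀ r ⊆ Metric.ball a₀ δ := Metric.ball_subset_ball hrδ
  -- constants
  set vB : ℝ := (volume (Metric.ball a₀ r)).toReal with hvBdef
  have hvB : 0 < vB := by
    rw [hvBdef]
    exact ENNReal.toReal_pos (Metric.measure_ball_pos volume a₀ hrpos).ne' measure_ball_lt_top.ne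
  set G : ℝ := ∫ a : EuclideanSpace ℝ (Fin d), Real.exp (-(c/4) * ‖a‖^2) with hGdef
  have hGnn : 0 ≤ G := integral_nonneg fun a => (Real.exp_pos _).le
  set vR : ℝ := (volume (Metric.closedBall (0:EuclideanSpace ℝ (Fin d)) R)).toReal with hvRdef
  have hvRnn : 0 ≤ vR := ENNReal.toReal_nonneg
  set K₁ : ℝ := vR + G with hK₁def
  have hK₁nn : 0 ≤ K₁ := add_nonneg hvRnn hGnn
  -- eventual facts
  have E1 : ∀ᶠ ν in nhdsWithin 0 (Set.Ioi 0), ν ∈ Set.Ioc (0:ℝ) 1 :=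
    Ioc_mem_nhdsGT_of_mem ⟨le_refl 0, one_pos⟩
  have E2 : ∀ᶠ ν in nhdsWithin 0 (Set.Ioi 0),
      ∀ a ∈ Metric.closedBall (0:EuclideanSpace ℝ (Fin d)) R, dist (Sstar a) (S ν a) < m/8 := by
    have h := hunif _ (isCompact_closedBall (0:EuclideanSpace ℝ (Fin d)) R)
    rw [Metric.tendstoUniformlyOn_iff] at h
    exact h (m/8) (by positivity)
  have E3 : ∀ᶠ ν in nhdsWithin 0 (Set.Ioi 0),
      (2*M₀*K₁/vB) * Real.exp (-(m/8) * ν⁻¹) < ε/2 := by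
    have h1 : Tendsto (fun ν : ℝ => (m/8) * ν⁻¹) (nhdsWithin 0 (Set.Ioi 0)) atTop :=
      Tendsto.const_mul_atTop (by positivity) tendsto_inv_nhdsGT_zero
    have h2 : Tendsto (fun ν : ℝ => Real.exp (-(m/8) * ν⁻¹)) (nhdsWithin 0 (Set.Ioi 0)) (nhds 0) := by
      have := Real.tendsto_exp_neg_atTop_nhds_zero.comp h1
      refine this.congr fun ν => ?_
      simp [Function.comp, neg_mul]
    have h3 : Tendsto (fun ν : ℝ => (2*M₀*K₁/vB) * Real.exp (-(m/8) * ν⁻¹))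
        (nhdsWithin 0 (Set.Ioi 0)) (nhds 0) := by
      have := h2.const_mul (2*M₀*K₁/vB)
      simpa using this
    exact h3.eventually (gt_mem_nhds (by positivity))
  filter_upwards [E1, E2, E3] with ν hν1 hν2 hν3
  have hνpos : 0 < ν := hν1.1
  set g : EuclideanSpace ℝ (Fin d) → ℝ := fun a => Real.exp (-S ν a / (2 * ν)) with hgdef
  have hgInt : Integrable g := exp_S_integrable d (hScont ν hν1) hc hνpos (hgrowth ν hν1)
  have hgpos : ∀ a, 0 < g a := fun a => Real.exp_pos _
  have hgnn : 0 ≤ᵐ[volume] g := Eventually.of_forall fun a => (hgpos a).le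
  have hfgInt : Integrable (fun a => f a * g a) :=
    hgInt.bdd_mul (c := M₀) hfc.aestronglyMeasurable (Eventually.of_forall fun a => by rw [Real.norm_eq_abs]; exact hM' a)
  set D : ℝ := ∫ a, g a with hDdef
  set N : ℝ := ∫ a, f a * g a with hNdef
  -- lower bound for D
  have hD1 : vB * Real.exp (-(m/4)/(2*ν)) ≤ ∫ a in Metric.ball a₀ r, g a := by
    have hb : ∀ a ∈ Metric.ball a₀ r, Real.exp (-(m/4)/(2*ν)) ≤ g a := by
      intro a ha
      apply Real.exp_le_exp.2
      have hdist := hν2 a (hRball (hrball ha))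
      rw [Real.dist_eq] at hdist
      have hSa : S ν a ≤ m/4 := by
        have := abs_lt.1 hdist
        have h2 := hrS a ha
        linarith [this.1, this.2]
      exact (div_le_div_iff_of_pos_right (by positivity)).2 (neg_le_neg hSa)
    calc vB * Real.exp (-(m/4)/(2*ν))
        = ∫ _ in Metric.ball a₀ r, Real.exp (-(m/4)/(2*ν)) := by
          rw [setIntegral_const, smul_eq_mul]; rfl
      _ ≤ ∫ a in Metric.ball a₀ r, g a :=
          setIntegral_mono_on (integrableOn_const measure_ball_lt_top.ne)
            hgInt.integrableOn measurableSet_ball hb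
  have hD2 : ∫ a in Metric.ball a₀ r, g a ≤ D := setIntegral_le_integral hgInt hgnn
  have hDpos : 0 < D := lt_of_lt_of_le (by positivity) (hD1.trans hD2)
  -- upper bound on the annulus A
  have houtA : ∫ a in A, g a ≤ vR * Real.exp (-(m/2)/(2*ν)) := by
    have hb : ∀ a ∈ A, g a ≤ Real.exp (-(m/2)/(2*ν)) := by
      intro a ha
      apply Real.exp_le_exp.2
      have h1 : m ≤ Sstar a := hmA a ha
      have h2 := hν2 a (hAsub ha)
      rw [Real.dist_eq] at h2
      have h3 : m/2 ≤ S ν a := by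
        have := abs_lt.1 h2; linarith [this.1, this.2]
      exact (div_le_div_iff_of_pos_right (by positivity)).2 (neg_le_neg h3)
    calc ∫ a in A, g a
        ≤ ∫ _ in A, Real.exp (-(m/2)/(2*ν)) :=
          setIntegral_mono_on hgInt.integrableOn
            (integrableOn_const (lt_of_le_of_lt (measure_mono hAsub) measure_closedBall_lt_top).ne)
            hAmeas hb
      _ = (volume A).toReal * Real.exp (-(m/2)/(2*ν)) := by rw [setIntegral_const, smul_eq_mul]; rfl
      _ ≤ vR * Real.exp (-(m/2)/(2*ν)) := by
          apply mul_le_mul_of_nonneg_right _ (Real.exp_pos _).le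
          exact ENNReal.toReal_mono measure_closedBall_lt_top.ne (measure_mono hAsub)
  -- upper bound far away
  set T : Set (EuclideanSpace ℝ (Fin d)) := (Metric.closedBall 0 R)ᶜ with hTdef
  have hTmeas : MeasurableSet T := measurableSet_closedBall.compl
  have houtT : ∫ a in T, g a ≤ G * Real.exp (-(m/2)/(2*ν)) := by
    have hb : ∀ a ∈ T, g a ≤ Real.exp (-(m/2)/(2*ν)) * Real.exp (-(c/4) * ‖a‖^2) := by
      intro a ha
      have hnorm : R ≤ ‖a‖ := by
        rw [hTdef, Set.mem_compl_iff, Metric.mem_closedBall, dist_zero_right, not_le] at ha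
        exact ha.le
      have h1 := hRgrow a hnorm ν hν1
      rw [← Real.exp_add]
      apply Real.exp_le_exp.2
      have key : -S ν a / (2*ν) ≤ -((c/2) * ‖a‖^2 + 1) / (2*ν) :=
        (div_le_div_iff_of_pos_right (by positivity)).2 (neg_le_neg h1)
      have e1 : -((c/2) * ‖a‖^2 + 1) / (2*ν) = -(1/(2*ν)) + (-(c/(4*ν))) * ‖a‖^2 := by
        field_simp; ring
      have e2 : -(1/(2*ν)) ≤ -(m/2)/(2*ν) := by
        rw [neg_div]
        apply neg_le_neg
        exact (div_le_div_iff_of_pos_right (by positivity)).2 (by linarith)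
      have e3 : (-(c/(4*ν))) * ‖a‖^2 ≤ (-(c/4)) * ‖a‖^2 := by
        apply mul_le_mul_of_nonneg_right _ (sq_nonneg _)
        apply neg_le_neg
        rw [div_le_div_iff₀ (by norm_num) (by positivity)]
        nlinarith [hν1.2]
      calc -S ν a / (2*ν) ≤ -((c/2) * ‖a‖^2 + 1) / (2*ν) := key
        _ = -(1/(2*ν)) + (-(c/(4*ν))) * ‖a‖^2 := e1
        _ ≤ -(m/2)/(2*ν) + (-(c/4)) * ‖a‖^2 := add_le_add e2 e3
        _ = -(m/2)/(2*ν) + -(c/4) * ‖a‖^2 := by ring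
    have hgaussInt : Integrable (fun a : EuclideanSpace ℝ (Fin d) =>
        Real.exp (-(m/2)/(2*ν)) * Real.exp (-(c/4) * ‖a‖^2)) :=
      (gauss_int d (by positivity : (0:ℝ) < c/4)).const_mul _
    calc ∫ a in T, g a
        ≤ ∫ a in T, Real.exp (-(m/2)/(2*ν)) * Real.exp (-(c/4) * ‖a‖^2) :=
          setIntegral_mono_on hgInt.integrableOn hgaussInt.integrableOn hTmeas hb
      _ ≤ ∫ a, Real.exp (-(m/2)/(2*ν)) * Real.exp (-(c/4) * ‖a‖^2) :=
          setIntegral_le_integral hgaussInt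
            (Eventually.of_forall fun a => by positivity)
      _ = Real.exp (-(m/2)/(2*ν)) * G := by rw [integral_const_mul]
      _ = G * Real.exp (-(m/2)/(2*ν)) := mul_comm _ _
  -- combine outside bounds
  have hout : ∫ a in (Metric.ball a₀ δ)ᶜ, g a ≤ K₁ * Real.exp (-(m/2)/(2*ν)) := by
    have hsub : (Metric.ball a₀ δ)ᶜ ⊆ A ∪ T := by
      intro a ha
      by_cases h : a ∈ Metric.closedBall (0:EuclideanSpace ℝ (Fin d)) R
      · exact Or.inl ⟨h, ha⟩
      · exact Or.inr h
    have hdisj : Disjoint A T := by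
      apply Set.disjoint_left.2
      intro a haA haT
      exact haT (hAsub haA)
    have h1 : ∫ a in (Metric.ball a₀ δ)ᶜ, g a ≤ ∫ a in A ∪ T, g a :=
      setIntegral_mono_set hgInt.integrableOn
        (Eventually.of_forall fun a => (hgpos a).le)
        (HasSubset.Subset.eventuallyLE hsub)
    have h2 : ∫ a in A ∪ T, g a = (∫ a in A, g a) + ∫ a in T, g a :=
      setIntegral_union hdisj hTmeas hgInt.integrableOn hgInt.integrableOn
    rw [hK₁def]
    calc ∫ a in (Metric.ball a₀ δ)ᶜ, g a ≤ (∫ a in A, g a) + ∫ a in T, g a := by rw [← h2]; exact h1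
      _ ≤ vR * Real.exp (-(m/2)/(2*ν)) + G * Real.exp (-(m/2)/(2*ν)) := add_le_add houtA houtT
      _ = (vR + G) * Real.exp (-(m/2)/(2*ν)) := by ring
  -- numerator bound
  have habs2 : ∀ a, |f a - f a₀| ≤ 2 * M₀ := by
    intro a
    calc |f a - f a₀| ≤ |f a| + |f a₀| := abs_sub _ _
      _ ≤ M₀ + M₀ := add_le_add (hM' a) (hM' a₀)
      _ = 2 * M₀ := by ring
  have hint2 : Integrable (fun a => (f a - f a₀) * g a) :=
    hgInt.bdd_mul (hfc.sub continuous_const).aestronglyMeasurable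
      (c := 2*M₀) (Eventually.of_forall fun a => by rw [Real.norm_eq_abs]; exact habs2 a)
  have hint3 : Integrable (fun a => |f a - f a₀| * g a) := by
    refine hint2.abs.congr (Eventually.of_forall fun a => ?_)
    simp only [abs_mul, abs_of_pos (hgpos a)]
  have heq : N - f a₀ * D = ∫ a, (f a - f a₀) * g a := by
    rw [hNdef, hDdef]
    rw [show (fun a => (f a - f a₀) * g a) = fun a => f a * g a - f a₀ * g a by
      funext a; ring]
    rw [integral_sub hfgInt (hgInt.const_mul (f a₀)), integral_const_mul]
  have hN : |N - f a₀ * D| ≤ (ε/4) * D + (2*M₀) * (K₁ * Real.exp (-(m/2)/(2*ν))) := by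
    rw [heq]
    have step1 : |∫ a, (f a - f a₀) * g a| ≤ ∫ a, |f a - f a₀| * g a := by
      have := norm_integral_le_integral_norm (fun a => (f a - f a₀) * g a) (μ := volume)
      rw [Real.norm_eq_abs] at this
      refine this.trans (le_of_eq (integral_congr_ae (Eventually.of_forall fun a => ?_)))
      simp only [Real.norm_eq_abs, abs_mul, abs_of_pos (hgpos a)]
    have split : ∫ a, |f a - f a₀| * g a =
        (∫ a in Metric.ball a₀ δ, |f a - f a₀| * g a) +
        ∫ a in (Metric.ball a₀ δ)ᶜ, |f a - f a₀| * g a :=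
      (integral_add_compl measurableSet_ball hint3).symm
    have part1 : ∫ a in Metric.ball a₀ δ, |f a - f a₀| * g a ≤ (ε/4) * D := by
      calc ∫ a in Metric.ball a₀ δ, |f a - f a₀| * g a
          ≤ ∫ a in Metric.ball a₀ δ, (ε/4) * g a := by
            apply setIntegral_mono_on hint3.integrableOn
              (hgInt.const_mul _).integrableOn measurableSet_ball
            intro a ha
            apply mul_le_mul_of_nonneg_right _ (hgpos a).le
            have := hδ (Metric.mem_ball.1 ha)
            rw [Real.dist_eq] at this
            exact this.le
        _ = (ε/4) * ∫ a in Metric.ball a₀ δ, g a := by rw [integral_const_mul]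
        _ ≤ (ε/4) * D := by
            apply mul_le_mul_of_nonneg_left _ (by positivity)
            exact setIntegral_le_integral hgInt hgnn
    have part2 : ∫ a in (Metric.ball a₀ δ)ᶜ, |f a - f a₀| * g a ≤
        (2*M₀) * (K₁ * Real.exp (-(m/2)/(2*ν))) := by
      calc ∫ a in (Metric.ball a₀ δ)ᶜ, |f a - f a₀| * g a
          ≤ ∫ a in (Metric.ball a₀ δ)ᶜ, (2*M₀) * g a := by
            apply setIntegral_mono_on hint3.integrableOn
              (hgInt.const_mul _).integrableOn measurableSet_ball.compl
            intro a _
            exact mul_le_mul_of_nonneg_right (habs2 a) (hgpos a).le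
        _ = (2*M₀) * ∫ a in (Metric.ball a₀ δ)ᶜ, g a := by rw [integral_const_mul]
        _ ≤ (2*M₀) * (K₁ * Real.exp (-(m/2)/(2*ν))) :=
            mul_le_mul_of_nonneg_left hout (by positivity)
    calc |∫ a, (f a - f a₀) * g a| ≤ ∫ a, |f a - f a₀| * g a := step1
      _ = _ + _ := split
      _ ≤ (ε/4) * D + (2*M₀) * (K₁ * Real.exp (-(m/2)/(2*ν))) := add_le_add part1 part2
  -- conclusion
  rw [Real.dist_eq]
  have hDne : D ≠ 0 := hDpos.ne'
  have hfrac : N / D - f a₀ = (N - f a₀ * D) / D := by field_simp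
  have hexp : Real.exp (-(m/2)/(2*ν)) / Real.exp (-(m/4)/(2*ν)) = Real.exp (-(m/8) * ν⁻¹) := by
    rw [← Real.exp_sub]
    congr 1
    field_simp
    ring
  have key : |N / D - f a₀| ≤ ε/4 + (2*M₀*K₁/vB) * Real.exp (-(m/8) * ν⁻¹) := by
    rw [hfrac, abs_div, abs_of_pos hDpos]
    have hDlow : vB * Real.exp (-(m/4)/(2*ν)) ≤ D := hD1.trans hD2
    calc |N - f a₀ * D| / D
        ≤ ((ε/4) * D + (2*M₀) * (K₁ * Real.exp (-(m/2)/(2*ν)))) / D := by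
          exact (div_le_div_iff_of_pos_right hDpos).2 hN
      _ = ε/4 + (2*M₀) * (K₁ * Real.exp (-(m/2)/(2*ν))) / D := by
          field_simp
      _ ≤ ε/4 + (2*M₀) * (K₁ * Real.exp (-(m/2)/(2*ν))) / (vB * Real.exp (-(m/4)/(2*ν))) := by
          have h1 : 0 < vB * Real.exp (-(m/4)/(2*ν)) := by positivity
          have h2 : 0 ≤ (2*M₀) * (K₁ * Real.exp (-(m/2)/(2*ν))) := by positivity
          exact add_le_add_right (div_le_div_of_nonneg_left h2 h1 hDlow) _
      _ = ε/4 + (2*M₀*K₁/vB) * Real.exp (-(m/8) * ν⁻¹) := by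
          rw [← hexp]
          field_simp
  have : |N / D - f a₀| < ε/4 + ε/2 := lt_of_le_of_lt key (by linarith [hν3])
  linarith
end

section
/- Let u₀: ℝ → ℝ be continuously differentiable, let I ⊆ (0, ∞) be an open interval, and let a₋, a₊, x_*: I → ℝ be differentiable functions satisfying, for all t ∈ I: x_*(t) = a₋(t) + t·u₀(a₋(t)) = a₊(t) + t·u₀(a₊(t)), x_*'(t) = ½( u₀(a₋(t)) + u₀(a₊(t)) ), and 1 + t·u₀'(a_±(t)) ≠ 0. Set u_±(t) := u₀(a_±(t)) and u'_±(t) := u₀'(a_±(t)) / (1 + t·u₀'(a_±(t))). Then a_±'(t) = ±½·(u₋(t) − u₊(t)) / (1 + t·u₀'(a_±(t))), x_* is twice differentiable on I, and the shock acceleration is x_*''(t) = −¼·( u₋(t) − u₊(t) )·( u'₋(t) − u'₊(t) ). -/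
/-- Shock kinematics for an inviscid Burgers entropy solution: from the endpoint relations
`x_*(t) = a_±(t) + t·u₀(a_±(t))`, the Rankine–Hugoniot velocity
`x_*'(t) = ½(u₋ + u₊)`, and nondegeneracy `1 + t·u₀'(a_±(t)) ≠ 0`, one deduces
`a_±'(t) = ±½(u₋ − u₊)/(1 + t·u₀'(a_±(t)))`, twice differentiability of `x_*`, and the
shock acceleration `x_*''(t) = −¼(u₋ − u₊)(u'₋ − u'₊)` with
`u'_± = u₀'(a_±)/(1 + t·u₀'(a_±))`. -/
theorem burgers_shock_kinematics (u₀ : ℝ → ℝ) (t₁ t₂ : ℝ) (xs am ap : ℝ → ℝ)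
    (hI : Set.Ioo t₁ t₂ ⊆ Set.Ioi (0 : ℝ))
    (hu₀ : ContDiff ℝ 1 u₀)
    (hdx : ∀ t ∈ Set.Ioo t₁ t₂, DifferentiableAt ℝ xs t)
    (hdam : ∀ t ∈ Set.Ioo t₁ t₂, DifferentiableAt ℝ am t)
    (hdap : ∀ t ∈ Set.Ioo t₁ t₂, DifferentiableAt ℝ ap t)
    (hend_m : ∀ t ∈ Set.Ioo t₁ t₂, xs t = am t + t * u₀ (am t))
    (hend_p : ∀ t ∈ Set.Ioo t₁ t₂, xs t = ap t + t * u₀ (ap t))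
    (hrh : ∀ t ∈ Set.Ioo t₁ t₂, deriv xs t = (1 / 2) * (u₀ (am t) + u₀ (ap t)))
    (hne_m : ∀ t ∈ Set.Ioo t₁ t₂, 1 + t * deriv u₀ (am t) ≠ 0)
    (hne_p : ∀ t ∈ Set.Ioo t₁ t₂, 1 + t * deriv u₀ (ap t) ≠ 0) :
    ∀ t ∈ Set.Ioo t₁ t₂,
      deriv ap t = (1 / 2) * (u₀ (am t) - u₀ (ap t)) / (1 + t * deriv u₀ (ap t)) ∧
      deriv am t = -((1 / 2) * (u₀ (am t) - u₀ (ap t)) / (1 + t * deriv u₀ (am t))) ∧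
      DifferentiableAt ℝ (deriv xs) t ∧
      deriv (deriv xs) t
        = -(1 / 4) * (u₀ (am t) - u₀ (ap t))
          * (deriv u₀ (am t) / (1 + t * deriv u₀ (am t))
             - deriv u₀ (ap t) / (1 + t * deriv u₀ (ap t))) := by
  intro t ht
  have hD : Differentiable ℝ u₀ := hu₀.differentiable one_ne_zero
  have hmem : Set.Ioo t₁ t₂ ∈ nhds t := isOpen_Ioo.mem_nhds ht
  have ham : HasDerivAt am (deriv am t) t := (hdam t ht).hasDerivAt
  have hap : HasDerivAt ap (deriv ap t) t := (hdap t ht).hasDerivAt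
  have hcm : HasDerivAt (fun s => u₀ (am s)) (deriv u₀ (am t) * deriv am t) t :=
    (hD (am t)).hasDerivAt.comp t ham
  have hcp : HasDerivAt (fun s => u₀ (ap s)) (deriv u₀ (ap t) * deriv ap t) t :=
    (hD (ap t)).hasDerivAt.comp t hap
  have hgm : HasDerivAt (fun s => am s + s * u₀ (am s))
      (deriv am t + (1 * u₀ (am t) + t * (deriv u₀ (am t) * deriv am t))) t :=
    ham.add ((hasDerivAt_id t).mul hcm)
  have hgp : HasDerivAt (fun s => ap s + s * u₀ (ap s))
      (deriv ap t + (1 * u₀ (ap t) + t * (deriv u₀ (ap t) * deriv ap t))) t :=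
    hap.add ((hasDerivAt_id t).mul hcp)
  have hxm : HasDerivAt xs
      (deriv am t + (1 * u₀ (am t) + t * (deriv u₀ (am t) * deriv am t))) t :=
    hgm.congr_of_eventuallyEq (Filter.eventuallyEq_of_mem hmem hend_m)
  have hxp : HasDerivAt xs
      (deriv ap t + (1 * u₀ (ap t) + t * (deriv u₀ (ap t) * deriv ap t))) t :=
    hgp.congr_of_eventuallyEq (Filter.eventuallyEq_of_mem hmem hend_p)
  have em : (1 / 2 : ℝ) * (u₀ (am t) + u₀ (ap t))
      = deriv am t + (1 * u₀ (am t) + t * (deriv u₀ (am t) * deriv am t)) := by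
    rw [← hrh t ht]; exact hxm.deriv.symm ▸ rfl
  have ep : (1 / 2 : ℝ) * (u₀ (am t) + u₀ (ap t))
      = deriv ap t + (1 * u₀ (ap t) + t * (deriv u₀ (ap t) * deriv ap t)) := by
    rw [← hrh t ht]; exact hxp.deriv.symm ▸ rfl
  have hnm := hne_m t ht
  have hnp := hne_p t ht
  have hdap' : deriv ap t = (1 / 2) * (u₀ (am t) - u₀ (ap t)) / (1 + t * deriv u₀ (ap t)) := by
    field_simp at ep ⊢
    linarith [ep]
  have hdam' : deriv am t
      = -((1 / 2) * (u₀ (am t) - u₀ (ap t)) / (1 + t * deriv u₀ (am t))) := by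
    field_simp at em ⊢
    linarith [em]
  have hg2 : HasDerivAt (fun s => (1 / 2 : ℝ) * (u₀ (am s) + u₀ (ap s)))
      ((1 / 2) * (deriv u₀ (am t) * deriv am t + deriv u₀ (ap t) * deriv ap t)) t :=
    (hcm.add hcp).const_mul (1 / 2)
  have hx2 : HasDerivAt (deriv xs)
      ((1 / 2) * (deriv u₀ (am t) * deriv am t + deriv u₀ (ap t) * deriv ap t)) t :=
    hg2.congr_of_eventuallyEq (Filter.eventuallyEq_of_mem hmem hrh)
  refine ⟨hdap', hdam', hx2.differentiableAt, ?_⟩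
  rw [hx2.deriv, hdam', hdap']
  field_simp
  ring
end

section
/- Let u₀: ℝ → ℝ be continuously differentiable, let ρ₀: ℝ → ℝ be continuous, let I ⊆ (0, ∞) be an open interval, and let a₋, a₊, x_*: I → ℝ be differentiable functions satisfying, for all t ∈ I: a₋(t) < a₊(t), x_*(t) = a₋(t) + t·u₀(a₋(t)) = a₊(t) + t·u₀(a₊(t)), x_*'(t) = ½( u₀(a₋(t)) + u₀(a₊(t)) ), and 1 + t·u₀'(a_±(t)) > 0. Define the absorbed mass M(t) := ∫_{a₋(t)}^{a₊(t)} ρ₀(a) da, the one-sided velocities u_±(t) := u₀(a_±(t)), and the one-sided densities ρ_±(t) := ρ₀(a_±(t)) / (1 + t·u₀'(a_±(t))). Then M is differentiable on I with M'(t) = ½·( u₋(t) − u₊(t) )·( ρ₋(t) + ρ₊(t) ). In particular, if ρ₀ ≥ 0 and u₋(t) > u₊(t) (the entropy condition), then M'(t) ≥ 0: the mass carried by the shock is nondecreasing in time. -/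
/-- Growth of the mass absorbed by a Burgers shock in the adhesion model: the absorbed
mass `M(t) = ∫_{a₋(t)}^{a₊(t)} ρ₀(a) da` is differentiable with
`M'(t) = ½(u₋ − u₊)(ρ₋ + ρ₊)`, where `ρ_± = ρ₀(a_±)/(1 + t·u₀'(a_±))`; in particular,
if `ρ₀ ≥ 0` and the entropy condition `u₋ > u₊` holds, then `M'(t) ≥ 0`. -/
theorem shock_mass_nondecreasing (u₀ ρ₀ : ℝ → ℝ) (t₁ t₂ : ℝ) (xs am ap : ℝ → ℝ)
    (hI : Set.Ioo t₁ t₂ ⊆ Set.Ioi (0 : ℝ))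
    (hu₀ : ContDiff ℝ 1 u₀) (hρ₀ : Continuous ρ₀)
    (hdx : ∀ t ∈ Set.Ioo t₁ t₂, DifferentiableAt ℝ xs t)
    (hdam : ∀ t ∈ Set.Ioo t₁ t₂, DifferentiableAt ℝ am t)
    (hdap : ∀ t ∈ Set.Ioo t₁ t₂, DifferentiableAt ℝ ap t)
    (hlt : ∀ t ∈ Set.Ioo t₁ t₂, am t < ap t)
    (hend_m : ∀ t ∈ Set.Ioo t₁ t₂, xs t = am t + t * u₀ (am t))
    (hend_p : ∀ t ∈ Set.Ioo t₁ t₂, xs t = ap t + t * u₀ (ap t))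
    (hrh : ∀ t ∈ Set.Ioo t₁ t₂, deriv xs t = (1 / 2) * (u₀ (am t) + u₀ (ap t)))
    (hpos_m : ∀ t ∈ Set.Ioo t₁ t₂, 0 < 1 + t * deriv u₀ (am t))
    (hpos_p : ∀ t ∈ Set.Ioo t₁ t₂, 0 < 1 + t * deriv u₀ (ap t)) :
    (∀ t ∈ Set.Ioo t₁ t₂,
      HasDerivAt (fun τ => ∫ a in (am τ)..(ap τ), ρ₀ a)
        ((1 / 2) * (u₀ (am t) - u₀ (ap t))
          * (ρ₀ (am t) / (1 + t * deriv u₀ (am t))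
             + ρ₀ (ap t) / (1 + t * deriv u₀ (ap t)))) t) ∧
    ((∀ a, 0 ≤ ρ₀ a) → ∀ t ∈ Set.Ioo t₁ t₂, u₀ (ap t) < u₀ (am t) →
      0 ≤ (1 / 2) * (u₀ (am t) - u₀ (ap t))
          * (ρ₀ (am t) / (1 + t * deriv u₀ (am t))
             + ρ₀ (ap t) / (1 + t * deriv u₀ (ap t)))) := by
  constructor
  · intro t ht
    have ham : HasDerivAt am (deriv am t) t := (hdam t ht).hasDerivAt
    have hap : HasDerivAt ap (deriv ap t) t := (hdap t ht).hasDerivAt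
    have hxs : HasDerivAt xs (deriv xs t) t := (hdx t ht).hasDerivAt
    have hu := hu₀.differentiable one_ne_zero
    have hDm : (1 + t * deriv u₀ (am t)) ≠ 0 := ne_of_gt (hpos_m t ht)
    have hDp : (1 + t * deriv u₀ (ap t)) ≠ 0 := ne_of_gt (hpos_p t ht)
    -- antiderivative
    set F : ℝ → ℝ := fun y => ∫ a in (0:ℝ)..y, ρ₀ a with hFdef
    have hFd : ∀ y : ℝ, HasDerivAt F (ρ₀ y) y := fun y =>
      intervalIntegral.integral_hasDerivAt_right (hρ₀.intervalIntegrable 0 y)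
        (hρ₀.stronglyMeasurableAtFilter MeasureTheory.volume (nhds y)) hρ₀.continuousAt
    have key : ∀ τ : ℝ, (∫ a in (am τ)..(ap τ), ρ₀ a) = F (ap τ) - F (am τ) := by
      intro τ
      have h := intervalIntegral.integral_add_adjacent_intervals
        (μ := MeasureTheory.volume)
        (hρ₀.intervalIntegrable 0 (am τ)) (hρ₀.intervalIntegrable (am τ) (ap τ))
      simp only [hFdef]
      linarith [h]
    -- derivatives of endpoints
    have hRm : HasDerivAt (fun τ => am τ + τ * u₀ (am τ))
        (deriv am t + (1 * u₀ (am t) + t * (deriv u₀ (am t) * deriv am t))) t :=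
      ham.add ((hasDerivAt_id t).mul (((hu (am t)).hasDerivAt).comp t ham))
    have hRp : HasDerivAt (fun τ => ap τ + τ * u₀ (ap τ))
        (deriv ap t + (1 * u₀ (ap t) + t * (deriv u₀ (ap t) * deriv ap t))) t :=
      hap.add ((hasDerivAt_id t).mul (((hu (ap t)).hasDerivAt).comp t hap))
    have hnhds : Set.Ioo t₁ t₂ ∈ nhds t := isOpen_Ioo.mem_nhds ht
    have heqm : xs =ᶠ[nhds t] fun τ => am τ + τ * u₀ (am τ) := by
      filter_upwards [hnhds] with τ hτ using hend_m τ hτ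
    have heqp : xs =ᶠ[nhds t] fun τ => ap τ + τ * u₀ (ap τ) := by
      filter_upwards [hnhds] with τ hτ using hend_p τ hτ
    have hm' : deriv xs t
        = deriv am t + (1 * u₀ (am t) + t * (deriv u₀ (am t) * deriv am t)) :=
      hxs.unique (hRm.congr_of_eventuallyEq heqm)
    have hp' : deriv xs t
        = deriv ap t + (1 * u₀ (ap t) + t * (deriv u₀ (ap t) * deriv ap t)) :=
      hxs.unique (hRp.congr_of_eventuallyEq heqp)
    have hrht := hrh t ht
    have e1 : (1 + t * deriv u₀ (am t)) * deriv am t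
        = (1/2) * (u₀ (ap t) - u₀ (am t)) := by
      linear_combination hrht - hm'
    have e2 : (1 + t * deriv u₀ (ap t)) * deriv ap t
        = (1/2) * (u₀ (am t) - u₀ (ap t)) := by
      linear_combination hrht - hp'
    have hD : HasDerivAt (fun τ => F (ap τ) - F (am τ))
        (ρ₀ (ap t) * deriv ap t - ρ₀ (am t) * deriv am t) t :=
      (((hFd (ap t)).comp t hap)).sub (((hFd (am t)).comp t ham))
    have hfun : (fun τ => ∫ a in (am τ)..(ap τ), ρ₀ a)
        = fun τ => F (ap τ) - F (am τ) := funext key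
    rw [hfun]
    have f1 : deriv am t
        = (1/2) * (u₀ (ap t) - u₀ (am t)) / (1 + t * deriv u₀ (am t)) := by
      rw [eq_div_iff hDm]; linear_combination e1
    have f2 : deriv ap t
        = (1/2) * (u₀ (am t) - u₀ (ap t)) / (1 + t * deriv u₀ (ap t)) := by
      rw [eq_div_iff hDp]; linear_combination e2
    convert hD using 1
    rw [f1, f2]
    field_simp
    ring
  · intro hρ t ht hent
    have hDm := hpos_m t ht
    have hDp := hpos_p t ht
    have h1 : 0 ≤ (1 / 2) * (u₀ (am t) - u₀ (ap t)) := by linarith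
    have h2 : 0 ≤ ρ₀ (am t) / (1 + t * deriv u₀ (am t)) :=
      div_nonneg (hρ _) hDm.le
    have h3 : 0 ≤ ρ₀ (ap t) / (1 + t * deriv u₀ (ap t)) :=
      div_nonneg (hρ _) hDp.le
    positivity
end
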